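/- arXiv:0908.3466 — 4 statements merged into one kernel-verified Lean document; each statement's English description precedes it below -/
import Mathlib

section
/- Let $(a_j)_{j\ge 1}$ be a sequence of positive real numbers with $\sum_{j=1}^{\infty} a_j < \infty$. Then $\frac{1}{N^2}\sum_{j=1}^{N} a_j^{-1} \to +\infty$ as $N \to \infty$. -/
open Filter

/-- Lemma 2.3: if `(a_j)_{j ≥ 1}` are positive and summable, then
`N⁻² ∑_{j=1}^N a_j⁻¹ → +∞` as `N → ∞`. -/
theorem stmt_0 (a : ℕ → ℝ) (hpos : ∀ j, 0 < a j) (hsum : Summable a) :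
    Tendsto (fun N : ℕ => (1 / (N : ℝ) ^ 2) * ∑ j ∈ Finset.Icc 1 N, (a j)⁻¹)
      atTop atTop := by
  have key : ∀ s : Finset ℕ, ((s.card : ℝ)) ^ 2 ≤ (∑ j ∈ s, a j) * ∑ j ∈ s, (a j)⁻¹ := by
    intro s
    have h := Finset.sum_mul_sq_le_sq_mul_sq s (fun j => Real.sqrt (a j))
      (fun j => (Real.sqrt (a j))⁻¹)
    have h1 : ∑ j ∈ s, Real.sqrt (a j) * (Real.sqrt (a j))⁻¹ = (s.card : ℝ) := by
      rw [Finset.sum_congr rfl fun j _ =>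
        mul_inv_cancel₀ (Real.sqrt_ne_zero'.mpr (hpos j))]
      simp
    have h2 : ∀ j ∈ s, Real.sqrt (a j) ^ 2 = a j := fun j _ => Real.sq_sqrt (hpos j).le
    have h3 : ∀ j ∈ s, (Real.sqrt (a j))⁻¹ ^ 2 = (a j)⁻¹ := fun j _ => by
      rw [inv_pow, Real.sq_sqrt (hpos j).le]
    rw [h1, Finset.sum_congr rfl h2, Finset.sum_congr rfl h3] at h
    exact h
  rw [tendsto_atTop]
  intro C
  set D : ℝ := max C 1 with hD
  have hD1 : (1 : ℝ) ≤ D := le_max_right _ _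
  have hDpos : (0 : ℝ) < D := lt_of_lt_of_le one_pos hD1
  have hCD : C ≤ D := le_max_left _ _
  have hεpos : (0 : ℝ) < 1 / (4 * D) := by positivity
  obtain ⟨s, hs⟩ := summable_iff_vanishing.mp hsum (Set.Iio (1 / (4 * D)))
    (Iio_mem_nhds hεpos)
  set M : ℕ := s.sup id with hM
  filter_upwards [eventually_ge_atTop (2 * (M + 1))] with N hN
  have hMN : M + 1 ≤ N := le_trans (by omega) hN
  have hdisj : Disjoint (Finset.Icc (M + 1) N) s := by
    rw [Finset.disjoint_left]
    intro x hx hxs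
    have : x ≤ M := Finset.le_sup (f := id) hxs
    have : M + 1 ≤ x := (Finset.mem_Icc.mp hx).1
    omega
  have hS := hs _ hdisj
  simp only [Set.mem_Iio] at hS
  set S : ℝ := ∑ j ∈ Finset.Icc (M + 1) N, a j with hSdef
  set Sinv : ℝ := ∑ j ∈ Finset.Icc (M + 1) N, (a j)⁻¹ with hSinvdef
  have hSpos : 0 < S :=
    Finset.sum_pos (fun j _ => hpos j) (by simp [Finset.nonempty_Icc]; omega)
  have hSinvpos : 0 < Sinv :=
    Finset.sum_pos (fun j _ => inv_pos.mpr (hpos j)) (by simp [Finset.nonempty_Icc]; omega)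
  have hcard : ((Finset.Icc (M + 1) N).card : ℝ) = (N : ℝ) - (M : ℝ) := by
    rw [Nat.card_Icc]
    have h9 : N + 1 - (M + 1) = N - M := by omega
    rw [h9, Nat.cast_sub (by omega : M ≤ N)]
  have hNcast : (2 : ℝ) * (M + 1) ≤ (N : ℝ) := by exact_mod_cast hN
  have hNM : (N : ℝ) / 2 ≤ (N : ℝ) - (M : ℝ) := by linarith
  have h1 : ((N : ℝ) / 2) ^ 2 ≤ S * Sinv := by
    have := key (Finset.Icc (M + 1) N)
    rw [hcard] at this
    refine le_trans (pow_le_pow_left₀ (by positivity) hNM 2) this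
  have h4DS : 4 * D * S < 1 := by
    rw [div_eq_inv_mul, lt_inv_mul_iff₀ (by positivity)] at hS
    nlinarith
  have hSinvB : (N : ℝ) ^ 2 * D ≤ Sinv := by
    nlinarith [mul_le_mul_of_nonneg_left h1 (by positivity : (0:ℝ) ≤ 4 * D),
      mul_lt_mul_of_pos_right h4DS hSinvpos]
  have hsub : Sinv ≤ ∑ j ∈ Finset.Icc 1 N, (a j)⁻¹ := by
    apply Finset.sum_le_sum_of_subset_of_nonneg
    · apply Finset.Icc_subset_Icc_left; omega
    · exact fun j _ _ => (inv_pos.mpr (hpos j)).le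
  have hNpos : (0 : ℝ) < (N : ℝ) := by
    have : 1 ≤ N := by omega
    exact_mod_cast Nat.lt_of_lt_of_le Nat.zero_lt_one this
  rw [one_div, inv_mul_eq_div, le_div_iff₀ (by positivity)]
  nlinarith [mul_le_mul_of_nonneg_right hCD (sq_nonneg (N : ℝ))]
end

section
/- There exists $\epsilon_0 > 0$ such that for every $\epsilon \in (0, \epsilon_0]$ the following holds. Let $t_0 \in \mathbb{R}$ and let $\alpha, \beta : [t_0, t_0+1] \to \mathbb{R}$ be differentiable functions satisfying $|\alpha'(t) - \cos\beta(t)\sin\alpha(t)| \le 0.01\,\epsilon$ and $|\beta'(t) + \cos\alpha(t)\sin\beta(t)| \le 0.01\,\epsilon$ for all $t \in [t_0, t_0+1]$. (1) If $|\alpha(t_0)| \le 3\epsilon$ and $|\beta(t_0)| \le 0.1$, then $|\beta(t)| \le 0.1$ for all $t \in [t_0, t_0+1]$ and $|\beta(t_0+1)| < 0.1$. (2) If moreover $2\epsilon < |\alpha(t_0)| \le 3\epsilon$, then $|\alpha(t_0+1)| > 3\epsilon$. -/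
open Set Filter Real
open scoped Topology

/-- Barrier lemma: if `F a ≤ c` and whenever `F t = c` the derivative is negative,
then `F ≤ c` on `[a, b]`. -/
lemma barrier_le {F : ℝ → ℝ} {a b c : ℝ}
    (hd : ∀ t ∈ Set.Icc a b, DifferentiableAt ℝ F t)
    (h0 : F a ≤ c)
    (hbar : ∀ t ∈ Set.Icc a b, F t = c → deriv F t < 0) :
    ∀ t ∈ Set.Icc a b, F t ≤ c := by
  by_contra h
  push_neg at h
  obtain ⟨t₁, ht₁, hc⟩ := h
  set S := {t ∈ Set.Icc a t₁ | F t ≤ c} with hS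
  have hsub : Set.Icc a t₁ ⊆ Set.Icc a b := Set.Icc_subset_Icc le_rfl ht₁.2
  have hSne : S.Nonempty := ⟨a, ⟨le_rfl, ht₁.1⟩, h0⟩
  have hScl : IsClosed S := by
    have hcont : ContinuousOn F (Set.Icc a t₁) := fun t ht =>
      (hd t (hsub ht)).continuousAt.continuousWithinAt
    exact hcont.preimage_isClosed_of_isClosed isClosed_Icc isClosed_Iic
  have hSbdd : BddAbove S := ⟨t₁, fun x hx => hx.1.2⟩
  set s := sSup S with hs
  have hsS : s ∈ S := hScl.csSup_mem hSne hSbdd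
  have hst₁ : s < t₁ := lt_of_le_of_ne hsS.1.2 (fun h => by
    have := hsS.2; rw [h] at this; linarith)
  have hgt : ∀ u, s < u → u ≤ t₁ → c < F u := by
    intro u h1 h2
    by_contra hle
    push_neg at hle
    have hau : a ≤ u := le_trans hsS.1.1 h1.le
    have : u ≤ s := le_csSup hSbdd ⟨⟨hau, h2⟩, hle⟩
    exact absurd this (not_le.2 h1)
  have hFs : F s = c := by
    refine le_antisymm hsS.2 ?_
    have htend : Filter.Tendsto F (𝓝[>] s) (𝓝 (F s)) :=
      ((hd s (hsub hsS.1)).continuousAt.tendsto).mono_left nhdsWithin_le_nhds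
    refine ge_of_tendsto htend ?_
    filter_upwards [Ioo_mem_nhdsGT hst₁] with u hu
    exact (hgt u hu.1 hu.2.le).le
  have hds : deriv F s < 0 := hbar s (hsub hsS.1) hFs
  have hD : HasDerivWithinAt F (deriv F s) (Set.Ioi s) s :=
    (hd s (hsub hsS.1)).hasDerivAt.hasDerivWithinAt
  have hslope : ∀ᶠ z in 𝓝[>] s, slope F s z < 0 :=
    hD.limsup_slope_le' (by simp) hds
  obtain ⟨z, hz1, hz2⟩ := (hslope.and (Ioo_mem_nhdsGT hst₁)).exists
  rw [slope_def_field] at hz1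
  have h1 : 0 < F z - F s := by have := hgt z hz2.1 hz2.2.le; linarith [hFs]
  have h2 : 0 < z - s := by linarith [hz2.1]
  have : 0 < (F z - F s) / (z - s) := div_pos h1 h2
  linarith

/-- Strict barrier at the right endpoint. -/
lemma barrier_lt {F : ℝ → ℝ} {a b c : ℝ} (hab : a < b)
    (hd : ∀ t ∈ Set.Icc a b, DifferentiableAt ℝ F t)
    (h0 : F a ≤ c)
    (hbar : ∀ t ∈ Set.Icc a b, F t = c → deriv F t < 0) :
    F b < c := by
  have hle := barrier_le hd h0 hbar
  refine lt_of_le_of_ne (hle b ⟨hab.le, le_rfl⟩) (fun hEq => ?_)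
  have hds : deriv F b < 0 := hbar b ⟨hab.le, le_rfl⟩ hEq
  have hD : HasDerivWithinAt F (deriv F b) (Set.Iio b) b :=
    (hd b ⟨hab.le, le_rfl⟩).hasDerivAt.hasDerivWithinAt
  have hslope : ∀ᶠ z in 𝓝[<] b, slope F b z < 0 :=
    hD.limsup_slope_le' (by simp) hds
  obtain ⟨z, hz1, hz2⟩ := (hslope.and (Ioo_mem_nhdsLT hab)).exists
  rw [slope_def_field] at hz1
  have h1 : F z - F b ≤ 0 := by
    have := hle z ⟨hz2.1.le, hz2.2.le⟩; rw [hEq]; linarith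
  have h2 : z - b < 0 := by linarith [hz2.2]
  have heq : (F z - F b) / (z - b) = (F b - F z) / (b - z) := by
    rw [div_eq_div_iff (by linarith) (by linarith)]; ring
  have : 0 ≤ (F b - F z) / (b - z) := div_nonneg (by linarith) (by linarith)
  rw [heq] at hz1
  linarith


lemma alpha_upper {t₀ ε : ℝ} {α β : ℝ → ℝ} (hε : 0 < ε) (hε' : ε ≤ 1/1000)
    (hdα : ∀ t ∈ Set.Icc t₀ (t₀ + 1), DifferentiableAt ℝ α t)
    (hα' : ∀ t ∈ Set.Icc t₀ (t₀ + 1),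
      |deriv α t - Real.cos (β t) * Real.sin (α t)| ≤ 0.01 * ε)
    (hα0 : |α t₀| ≤ 3 * ε) :
    ∀ t ∈ Set.Icc t₀ (t₀ + 1), |α t| ≤ 1/100 := by
  have hcont : ContinuousOn α (Set.Icc t₀ (t₀ + 1)) := fun t ht =>
    (hdα t ht).continuousAt.continuousWithinAt
  have hder : ∀ t ∈ Set.Ico t₀ (t₀ + 1), HasDerivWithinAt α (deriv α t) (Set.Ici t) t :=
    fun t ht => (hdα t (Set.Ico_subset_Icc_self ht)).hasDerivAt.hasDerivWithinAt
  have hbound : ∀ t ∈ Set.Ico t₀ (t₀ + 1), ‖deriv α t‖ ≤ 1 * ‖α t‖ + 0.01 * ε := by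
    intro t ht
    have h := hα' t (Set.Ico_subset_Icc_self ht)
    have h2 : |Real.cos (β t) * Real.sin (α t)| ≤ |α t| := by
      rw [abs_mul]
      calc |Real.cos (β t)| * |Real.sin (α t)| ≤ 1 * |Real.sin (α t)| :=
            mul_le_mul_of_nonneg_right (Real.abs_cos_le_one _) (abs_nonneg _)
        _ = |Real.sin (α t)| := one_mul _
        _ ≤ |α t| := Real.abs_sin_le_abs
    have h3 : |deriv α t| ≤ |deriv α t - Real.cos (β t) * Real.sin (α t)|
        + |Real.cos (β t) * Real.sin (α t)| := by
      calc |deriv α t| = |(deriv α t - Real.cos (β t) * Real.sin (α t))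
            + Real.cos (β t) * Real.sin (α t)| := by ring_nf
        _ ≤ _ := abs_add_le _ _
    simp only [Real.norm_eq_abs, one_mul]
    linarith
  have key := norm_le_gronwallBound_of_norm_deriv_right_le (δ := 3 * ε) (K := 1)
    (ε := 0.01 * ε) hcont hder (by simpa [Real.norm_eq_abs] using hα0) hbound
  intro t ht
  have h := key t ht
  rw [Real.norm_eq_abs, gronwallBound_of_K_ne_0 one_ne_zero] at h
  have hx0 : 0 ≤ t - t₀ := by linarith [ht.1]
  have hx1 : t - t₀ ≤ 1 := by linarith [ht.2]
  have hE1 : (1:ℝ) ≤ Real.exp (1 * (t - t₀)) := by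
    rw [one_mul]; exact Real.one_le_exp hx0
  have hE2 : Real.exp (1 * (t - t₀)) ≤ Real.exp 1 := by
    rw [one_mul]; exact Real.exp_le_exp.2 hx1
  have he : Real.exp 1 < 2.7182818286 := Real.exp_one_lt_d9
  nlinarith [h, hε.le]

lemma beta_barrier {t₀ ε : ℝ} {α β : ℝ → ℝ} (hε : 0 < ε) (hε' : ε ≤ 1/1000)
    (hdβ : ∀ t ∈ Set.Icc t₀ (t₀ + 1), DifferentiableAt ℝ β t)
    (hβ' : ∀ t ∈ Set.Icc t₀ (t₀ + 1),
      |deriv β t + Real.cos (α t) * Real.sin (β t)| ≤ 0.01 * ε)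
    (hA : ∀ t ∈ Set.Icc t₀ (t₀ + 1), |α t| ≤ 1/100) :
    ∀ t ∈ Set.Icc t₀ (t₀ + 1), (fun u => β u * β u) t = 1/100 →
      deriv (fun u => β u * β u) t < 0 := by
  intro t ht hFt
  have hder : deriv (fun u => β u * β u) t = deriv β t * β t + β t * deriv β t :=
    ((hdβ t ht).hasDerivAt.mul (hdβ t ht).hasDerivAt).deriv
  rw [hder]
  set b := β t with hb
  set d := deriv β t with hd
  set ca := Real.cos (α t) with hca
  have hb2 : b * b = 1/100 := hFt
  have hzero : (b - 1/10) * (b + 1/10) = 0 := by rw [← hb2] at *; ring_nf; nlinarith [hb2]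
  have hsin : (1:ℝ)/10 - (1/10)^3/4 < Real.sin (1/10) :=
    by have := Real.sin_gt_sub_cube (x := 1/10) (by norm_num); norm_num at this ⊢; linarith
  have hsin1 : Real.sin (1/10) ≤ 1/10 := by
    have := Real.sin_le (x := 1/10) (by norm_num); linarith
  have hbs : b * Real.sin b = 1/10 * Real.sin (1/10) := by
    rcases mul_eq_zero.1 hzero with h | h
    · have : b = 1/10 := by linarith
      rw [this]
    · have : b = -(1/10) := by linarith
      rw [this, Real.sin_neg]; ring
  have habs : |b| = 1/10 := by
    rcases mul_eq_zero.1 hzero with h | h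
    · have : b = 1/10 := by linarith
      rw [this]; norm_num
    · have : b = -(1/10) := by linarith
      rw [this]; norm_num
  have hcal : (0.99995 : ℝ) ≤ ca := by
    have h1 : 1 - (α t)^2/2 ≤ ca := Real.one_sub_sq_div_two_le_cos
    have h2 := abs_le.1 (hA t ht)
    nlinarith [h2.1, h2.2]
  have hca1 : ca ≤ 1 := Real.cos_le_one _
  have hr := abs_le.1 (hβ' t ht)
  have hbr : |b * (d + ca * Real.sin b)| ≤ 1/10 * (0.01 * ε) := by
    rw [abs_mul, habs]
    exact mul_le_mul_of_nonneg_left (hβ' t ht) (by norm_num)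
  have hbr' := abs_le.1 hbr
  -- b * d = b*(d + ca * sin b) - ca * (b * sin b)
  have hkey : b * d = b * (d + ca * Real.sin b) - ca * (b * Real.sin b) := by ring
  have hprod : ca * (b * Real.sin b) ≥ 0.99995 * (1/10 * (1/10 - (1/10)^3/4)) := by
    rw [hbs]
    have hpos : (0:ℝ) < 1/10 * Real.sin (1/10) := by nlinarith
    nlinarith
  nlinarith [hbr'.2, hε.le, hε']

lemma beta_le {t₀ ε : ℝ} {α β : ℝ → ℝ} (hε : 0 < ε) (hε' : ε ≤ 1/1000)
    (hdβ : ∀ t ∈ Set.Icc t₀ (t₀ + 1), DifferentiableAt ℝ β t)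
    (hβ' : ∀ t ∈ Set.Icc t₀ (t₀ + 1),
      |deriv β t + Real.cos (α t) * Real.sin (β t)| ≤ 0.01 * ε)
    (hA : ∀ t ∈ Set.Icc t₀ (t₀ + 1), |α t| ≤ 1/100)
    (hβ0 : |β t₀| ≤ 0.1) :
    (∀ t ∈ Set.Icc t₀ (t₀ + 1), |β t| ≤ 0.1) ∧ |β (t₀ + 1)| < 0.1 := by
  have hdF : ∀ t ∈ Set.Icc t₀ (t₀ + 1), DifferentiableAt ℝ (fun u => β u * β u) t :=
    fun t ht => (hdβ t ht).mul (hdβ t ht)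
  have hβ0' := abs_le.1 hβ0
  have hF0 : (fun u => β u * β u) t₀ ≤ 1/100 := by
    simp only; nlinarith [hβ0'.1, hβ0'.2]
  have hbar := beta_barrier hε hε' hdβ hβ' hA
  have hle := barrier_le hdF hF0 hbar
  constructor
  · intro t ht
    have h := hle t ht
    rw [abs_le]
    constructor <;> nlinarith [h]
  · have h := barrier_lt (by linarith : t₀ < t₀ + 1) hdF hF0 hbar
    rw [abs_lt]
    constructor <;> nlinarith [h]

lemma alpha_grow {t₀ ε : ℝ} {α β : ℝ → ℝ} (hε : 0 < ε) (hε' : ε ≤ 1/1000)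
    (hdα : ∀ t ∈ Set.Icc t₀ (t₀ + 1), DifferentiableAt ℝ α t)
    (hα' : ∀ t ∈ Set.Icc t₀ (t₀ + 1),
      |deriv α t - Real.cos (β t) * Real.sin (α t)| ≤ 0.01 * ε)
    (hA : ∀ t ∈ Set.Icc t₀ (t₀ + 1), |α t| ≤ 1/100)
    (hB : ∀ t ∈ Set.Icc t₀ (t₀ + 1), |β t| ≤ 0.1)
    (h2 : 2 * ε < α t₀) : 3 * ε < α (t₀ + 1) := by
  -- generic lower bound for the vector field when 0 < α t ≤ 1/100
  have hfield : ∀ t ∈ Set.Icc t₀ (t₀ + 1), 0 < α t →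
      Real.cos (β t) * Real.sin (α t) ≥ (199/200) * ((999/1000) * α t) := by
    intro t ht hpos
    have hup : α t ≤ 1/100 := (abs_le.1 (hA t ht)).2
    have hsin : α t - (α t)^3/4 < Real.sin (α t) :=
      by have := Real.sin_gt_sub_cube hpos; nlinarith [pow_pos hpos 3]
    have hsq : α t * α t ≤ 1/10000 := by nlinarith
    have hcube : α t * (α t * α t) ≤ α t * (1/10000) :=
      mul_le_mul_of_nonneg_left hsq hpos.le
    have hsin' : (999/1000) * α t ≤ Real.sin (α t) := by nlinarith [hsin, hcube]
    have hcos : (199/200 : ℝ) ≤ Real.cos (β t) := by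
      have h1 : 1 - (β t)^2/2 ≤ Real.cos (β t) := Real.one_sub_sq_div_two_le_cos
      have h2 := abs_le.1 (hB t ht)
      have h2a : -(1/10 : ℝ) ≤ β t := by norm_num at h2 ⊢; linarith [h2.1]
      have h2b : β t ≤ (1/10 : ℝ) := by norm_num at h2 ⊢; linarith [h2.2]
      nlinarith
    have hsp : (0:ℝ) ≤ (999/1000) * α t := by positivity
    calc Real.cos (β t) * Real.sin (α t) ≥ (199/200) * ((999/1000) * α t) := by nlinarith
      _ = _ := rfl
  -- Step 1: α stays ≥ 2ε
  have hlow : ∀ t ∈ Set.Icc t₀ (t₀ + 1), 2 * ε ≤ α t := by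
    have hd : ∀ t ∈ Set.Icc t₀ (t₀ + 1), DifferentiableAt ℝ (fun u => -α u) t :=
      fun t ht => (hdα t ht).neg
    have hbar : ∀ t ∈ Set.Icc t₀ (t₀ + 1), (fun u => -α u) t = -(2*ε) →
        deriv (fun u => -α u) t < 0 := by
      intro t ht hFt
      have hat : α t = 2 * ε := by simp only at hFt; linarith
      have hderneg : deriv (fun u => -α u) t = -deriv α t := deriv.neg
      rw [hderneg, neg_lt, neg_zero]
      have hf := hfield t ht (by rw [hat]; positivity)
      have hr := abs_le.1 (hα' t ht)
      nlinarith [hr.1, hf, hat]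
    have h := barrier_le hd (by show -α t₀ ≤ -(2*ε); linarith) hbar
    intro t ht
    have := h t ht
    linarith
  -- Step 2: Grönwall from below via -α
  have hcont : ContinuousOn (fun u => -α u) (Set.Icc t₀ (t₀ + 1)) := fun t ht =>
    ((hdα t ht).neg.continuousAt.continuousWithinAt)
  have hliminf : ∀ t ∈ Set.Ico t₀ (t₀ + 1), ∀ r, -deriv α t < r →
      ∃ᶠ z in 𝓝[>] t, (z - t)⁻¹ * ((fun u => -α u) z - (fun u => -α u) t) < r := by
    intro t ht r hr
    have hD : HasDerivWithinAt (fun u => -α u) (-deriv α t) (Set.Ici t) t :=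
      ((hdα t (Set.Ico_subset_Icc_self ht)).hasDerivAt.neg).hasDerivWithinAt
    have hfreq := hD.liminf_right_slope_le hr
    refine (hfreq.and_eventually (eventually_mem_nhdsWithin)).mono ?_
    rintro z ⟨hz1, hz2⟩
    rw [slope_def_field, div_eq_inv_mul] at hz1
    exact hz1
  have hbound : ∀ t ∈ Set.Ico t₀ (t₀ + 1),
      -deriv α t ≤ (49/50) * ((fun u => -α u) t) + 0.01 * ε := by
    intro t ht
    have ht' := Set.Ico_subset_Icc_self ht
    have hl := hlow t ht'
    have hf := hfield t ht' (by linarith)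
    have hr := abs_le.1 (hα' t ht')
    show -deriv α t ≤ (49/50) * (-α t) + 0.01 * ε
    nlinarith [hr.1, hf, hl]
  have key := le_gronwallBound_of_liminf_deriv_right_le (δ := -(2*ε)) (K := 49/50)
    (ε := 0.01 * ε) hcont hliminf (by show -α t₀ ≤ -(2*ε); linarith) hbound
  have h := key (t₀ + 1) ⟨by linarith, le_rfl⟩
  rw [gronwallBound_of_K_ne_0 (by norm_num : (49/50 : ℝ) ≠ 0)] at h
  simp only [add_sub_cancel_left] at h
  have hE1 : (1:ℝ) + 49/50 ≤ Real.exp (49/50 * 1) := by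
    rw [mul_one]; linarith [Real.add_one_le_exp (49/50 : ℝ)]
  have hE2 : Real.exp (49/50 * 1) ≤ Real.exp 1 := Real.exp_le_exp.2 (by norm_num)
  have he : Real.exp 1 < 2.7182818286 := Real.exp_one_lt_d9
  nlinarith [h, hε.le]

/-- Lemma 2.5: for the perturbed hyperbolic system
`α' ≈ cos β sin α`, `β' ≈ -cos α sin β` (perturbation of size `0.01 ε`),
trajectories starting with `|α| ≤ 3ε`, `|β| ≤ 0.1` keep `|β| ≤ 0.1` up to
time `t₀ + 1` (with `|β(t₀+1)| < 0.1`), and if moreover `|α(t₀)| > 2ε`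
then `|α(t₀+1)| > 3ε`. -/
theorem stmt_6 :
    ∃ ε₀ : ℝ, 0 < ε₀ ∧
      ∀ ε : ℝ, 0 < ε → ε ≤ ε₀ →
        ∀ (t₀ : ℝ) (α β : ℝ → ℝ),
          (∀ t ∈ Set.Icc t₀ (t₀ + 1), DifferentiableAt ℝ α t) →
          (∀ t ∈ Set.Icc t₀ (t₀ + 1), DifferentiableAt ℝ β t) →
          (∀ t ∈ Set.Icc t₀ (t₀ + 1),
            |deriv α t - Real.cos (β t) * Real.sin (α t)| ≤ 0.01 * ε) →
          (∀ t ∈ Set.Icc t₀ (t₀ + 1),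
            |deriv β t + Real.cos (α t) * Real.sin (β t)| ≤ 0.01 * ε) →
          (|α t₀| ≤ 3 * ε → |β t₀| ≤ 0.1 →
            ((∀ t ∈ Set.Icc t₀ (t₀ + 1), |β t| ≤ 0.1) ∧ |β (t₀ + 1)| < 0.1)) ∧
          (|α t₀| ≤ 3 * ε → |β t₀| ≤ 0.1 → 2 * ε < |α t₀| →
            3 * ε < |α (t₀ + 1)|) := by
  refine ⟨1/1000, by norm_num, ?_⟩
  intro ε hε hε' t₀ α β hdα hdβ hα' hβ'
  constructor
  · intro h1 h2
    exact beta_le hε hε' hdβ hβ' (alpha_upper hε hε' hdα hα' h1) h2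
  · intro h1 h2 h3
    have hA := alpha_upper hε hε' hdα hα' h1
    have hB := (beta_le hε hε' hdβ hβ' hA h2).1
    rcases lt_abs.1 h3 with hpos | hneg
    · have := alpha_grow hε hε' hdα hα' hA hB hpos
      exact lt_of_lt_of_le this (le_abs_self _)
    · have hdn : ∀ t ∈ Set.Icc t₀ (t₀ + 1), DifferentiableAt ℝ (fun u => -α u) t :=
        fun t ht => (hdα t ht).neg
      have hn' : ∀ t ∈ Set.Icc t₀ (t₀ + 1),
          |deriv (fun u => -α u) t - Real.cos (β t) * Real.sin ((fun u => -α u) t)| ≤ 0.01 * ε := by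
        intro t ht
        have hdd : deriv (fun u => -α u) t = -deriv α t := deriv.neg
        have h := hα' t ht
        have heq : deriv (fun u => -α u) t - Real.cos (β t) * Real.sin ((fun u => -α u) t)
            = -(deriv α t - Real.cos (β t) * Real.sin (α t)) := by
          show deriv (fun u => -α u) t - Real.cos (β t) * Real.sin (-α t) = _
          rw [hdd, Real.sin_neg]; ring
        rw [heq, abs_neg]
        exact h
      have hAn : ∀ t ∈ Set.Icc t₀ (t₀ + 1), |(fun u => -α u) t| ≤ 1/100 := by
        intro t ht
        show |-α t| ≤ 1/100
        rw [abs_neg]; exact hA t ht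
      have hlt : 2 * ε < (fun u => -α u) t₀ := by show 2 * ε < -α t₀; exact hneg
      have := alpha_grow hε hε' hdn hn' hAn hB hlt
      have h5 : 3 * ε < -α (t₀ + 1) := this
      exact lt_of_lt_of_le h5 (neg_le_abs _)
end

section
/- There exists $\epsilon_0 > 0$ with the following property. Let $f_1, f_2, g_1, g_2 : \mathbb{R}^2 \times [0,\infty) \to \mathbb{R}$ be continuously differentiable functions with $\sup |f_i| < \epsilon_0$ and $\sup |g_i| < \epsilon_0$ for $i = 1,2$. Then for every $r > 0$ there exist $\alpha_0, \beta_0 \in \mathbb{R}$ with $0 < \beta_0$ and $\alpha_0^2 + \beta_0^2 < r^2$, and differentiable functions $\alpha, \beta : [0,\infty) \to \mathbb{R}$ with $\alpha(0) = \alpha_0$, $\beta(0) = \beta_0$, satisfying for all $t \ge 0$: $$\alpha'(t) = \alpha(t)\,(1 + f_1(\alpha(t),\beta(t),t)) + f_2(\alpha(t),\beta(t),t)\,\beta(t),$$ $$\beta'(t) = -\beta(t)\,(1 + g_1(\alpha(t),\beta(t),t)) + g_2(\alpha(t),\beta(t),t)\,\alpha(t),$$ and $|\alpha(t)| \le e^{-t/2}\,\beta_0$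 and $|\beta(t)| \le e^{-t/2}\,\beta_0$. -/
open Set Real Filter Metric Topology
open scoped NNReal


/-- If the right derivative at `t` is positive, then `f > f t` shortly after `t`. -/
lemma right_deriv_pos_aux {f : ℝ → ℝ} {t d : ℝ}
    (h : HasDerivWithinAt f d (Ici t) t) (hd : 0 < d) :
    ∀ᶠ z in 𝓝[>] t, f t < f z := by
  rw [hasDerivWithinAt_iff_tendsto_slope, Set.Ici_sdiff_left] at h
  filter_upwards [h.eventually (lt_mem_nhds hd), self_mem_nhdsWithin] with z hz hz'
  have hzt : t < z := hz'
  have h2 := mul_pos hz (sub_pos.2 hzt)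
  rw [slope_def_field, div_mul_cancel₀] at h2
  · linarith
  · exact sub_ne_zero.2 (ne_of_gt hzt)

/-- If the right derivative at `t` is negative, then `f < f t` shortly after `t`. -/
lemma right_deriv_neg_aux {f : ℝ → ℝ} {t d : ℝ}
    (h : HasDerivWithinAt f d (Ici t) t) (hd : d < 0) :
    ∀ᶠ z in 𝓝[>] t, f z < f t := by
  rw [hasDerivWithinAt_iff_tendsto_slope, Set.Ici_sdiff_left] at h
  filter_upwards [h.eventually (gt_mem_nhds hd), self_mem_nhdsWithin] with z hz hz'
  have hzt : t < z := hz'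
  have h2 := mul_neg_of_neg_of_pos hz (sub_pos.2 hzt)
  rw [slope_def_field, div_mul_cancel₀] at h2
  · linarith
  · exact sub_ne_zero.2 (ne_of_gt hzt)

/-- Scalar Grönwall inequality with right derivatives. -/
lemma scalar_gronwall_aux {f f' : ℝ → ℝ} {K δ b : ℝ}
    (hc : ContinuousOn f (Icc 0 b))
    (hd : ∀ t ∈ Ico (0:ℝ) b, HasDerivWithinAt f (f' t) (Ici t) t)
    (h0 : f 0 ≤ δ)
    (hb : ∀ t ∈ Ico (0:ℝ) b, f' t ≤ K * f t) :
    ∀ t ∈ Icc (0:ℝ) b, f t ≤ δ * Real.exp (K * t) := by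
  intro t ht
  have key := le_gronwallBound_of_liminf_deriv_right_le (f' := f') (ε := 0) hc ?_ h0
      (fun x hx => by simpa using hb x hx) t ht
  · rwa [gronwallBound_ε0, sub_zero] at key
  · intro x hx r hr
    have h1 := hd x hx
    rw [hasDerivWithinAt_iff_tendsto_slope, Set.Ici_sdiff_left] at h1
    have h2 : ∀ᶠ z in 𝓝[>] x, slope f x z < r := h1.eventually (gt_mem_nhds hr)
    refine h2.frequently.mono ?_
    intro z hz
    rwa [slope_def_field, div_eq_inv_mul] at hz

/-- Extract the first component of a product-valued derivative. -/
lemma hasDerivWithinAt_fst_aux {x : ℝ → ℝ × ℝ} {d : ℝ × ℝ} {s : Set ℝ} {t : ℝ}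
    (h : HasDerivWithinAt x d s t) : HasDerivWithinAt (fun τ => (x τ).1) d.1 s t := by
  exact (ContinuousLinearMap.fst ℝ ℝ ℝ).hasFDerivAt.comp_hasDerivWithinAt t h

lemma hasDerivWithinAt_snd_aux {x : ℝ → ℝ × ℝ} {d : ℝ × ℝ} {s : Set ℝ} {t : ℝ}
    (h : HasDerivWithinAt x d s t) : HasDerivWithinAt (fun τ => (x τ).2) d.2 s t := by
  exact (ContinuousLinearMap.snd ℝ ℝ ℝ).hasFDerivAt.comp_hasDerivWithinAt t h



section AuxVF
variable (f₁ f₂ g₁ g₂ : ℝ × ℝ × ℝ → ℝ)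

/-- The perturbed hyperbolic vector field, as a function of `(t, (α, β))`. -/
noncomputable def vfX : ℝ × (ℝ × ℝ) → ℝ × ℝ := fun p =>
  (p.2.1 * (1 + f₁ (p.2.1, p.2.2, p.1)) + f₂ (p.2.1, p.2.2, p.1) * p.2.2,
   -p.2.2 * (1 + g₁ (p.2.1, p.2.2, p.1)) + g₂ (p.2.1, p.2.2, p.1) * p.2.1)

lemma vfX_contDiff (h1 : ContDiff ℝ 1 f₁) (h2 : ContDiff ℝ 1 f₂)
    (h3 : ContDiff ℝ 1 g₁) (h4 : ContDiff ℝ 1 g₂) :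
    ContDiff ℝ 1 (vfX f₁ f₂ g₁ g₂) := by
  have hq : ContDiff ℝ 1 (fun p : ℝ × (ℝ × ℝ) => (p.2.1, p.2.2, p.1)) :=
    (contDiff_snd.fst).prodMk ((contDiff_snd.snd).prodMk contDiff_fst)
  exact ((contDiff_snd.fst.mul (contDiff_const.add (h1.comp hq))).add
    ((h2.comp hq).mul contDiff_snd.snd)).prodMk
    ((contDiff_snd.snd.neg.mul (contDiff_const.add (h3.comp hq))).add
    ((h4.comp hq).mul contDiff_snd.fst))

/-- clamp to `[-c, c]`. -/
noncomputable def clampX (c : ℝ) : ℝ → ℝ := fun x => max (min x c) (-c)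

lemma clampX_lipschitz (c : ℝ) : LipschitzWith 1 (clampX c) :=
  (LipschitzWith.id.min_const c).max_const (-c)

lemma clampX_mem {c : ℝ} (hc : 0 ≤ c) (x : ℝ) : clampX c x ∈ Icc (-c) c :=
  ⟨le_max_right _ _, max_le (le_trans (min_le_right _ _) le_rfl) (by linarith)⟩

lemma clampX_eq {c x : ℝ} (h : |x| ≤ c) : clampX c x = x := by
  obtain ⟨h1, h2⟩ := abs_le.1 h
  unfold clampX
  rw [min_eq_left h2, max_eq_left h1]

noncomputable def clamp2X (c : ℝ) : ℝ × ℝ → ℝ × ℝ := fun x => (clampX c x.1, clampX c x.2)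

lemma clamp2X_lipschitz (c : ℝ) : LipschitzWith 1 (clamp2X c) := by
  have h := ((clampX_lipschitz c).comp LipschitzWith.prod_fst).prodMk
    ((clampX_lipschitz c).comp LipschitzWith.prod_snd)
  simp at h
  exact h

lemma clamp2X_eq {c : ℝ} {x : ℝ × ℝ} (h1 : |x.1| ≤ c) (h2 : |x.2| ≤ c) :
    clamp2X c x = x := by
  unfold clamp2X
  rw [clampX_eq h1, clampX_eq h2]

/-- The modified (globally Lipschitz, bounded) vector field with time horizon `n`
and space clamped to the `r`-box. -/
noncomputable def vmodX (r : ℝ) (n : ℕ) : ℝ → ℝ × ℝ → ℝ × ℝ := fun t x =>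
  vfX f₁ f₂ g₁ g₂ (clampX n t, clamp2X r x)

lemma vmodX_eq_vfX {r : ℝ} {n : ℕ} {t : ℝ} {x : ℝ × ℝ} (ht : |t| ≤ (n:ℝ))
    (h1 : |x.1| ≤ r) (h2 : |x.2| ≤ r) :
    vmodX f₁ f₂ g₁ g₂ r n t x = vfX f₁ f₂ g₁ g₂ (t, x) := by
  unfold vmodX
  rw [clampX_eq ht, clamp2X_eq h1 h2]

lemma vmodX_lipschitz (h1 : ContDiff ℝ 1 f₁) (h2 : ContDiff ℝ 1 f₂)
    (h3 : ContDiff ℝ 1 g₁) (h4 : ContDiff ℝ 1 g₂) (r : ℝ) (hr : 0 ≤ r) (n : ℕ) :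
    ∃ K : ℝ≥0, ∀ t, LipschitzWith K (vmodX f₁ f₂ g₁ g₂ r n t) := by
  have hΦ := vfX_contDiff f₁ f₂ g₁ g₂ h1 h2 h3 h4
  set S : Set (ℝ × (ℝ × ℝ)) := Icc (-(n:ℝ)) n ×ˢ (Icc (-r) r ×ˢ Icc (-r) r) with hS
  have hScompact : IsCompact S := isCompact_Icc.prod (isCompact_Icc.prod isCompact_Icc)
  have hSconvex : Convex ℝ S := (convex_Icc _ _).prod ((convex_Icc _ _).prod (convex_Icc _ _))
  have hcont : ContinuousOn (fderiv ℝ (vfX f₁ f₂ g₁ g₂)) S :=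
    (hΦ.continuous_fderiv one_ne_zero).continuousOn
  obtain ⟨M, hM⟩ := hScompact.exists_bound_of_continuousOn hcont
  set K : ℝ≥0 := ⟨max M 0, le_max_right _ _⟩ with hK
  have hlip : LipschitzOnWith K (vfX f₁ f₂ g₁ g₂) S := by
    apply hSconvex.lipschitzOnWith_of_nnnorm_fderiv_le
      (fun x _ => (hΦ.differentiable one_ne_zero).differentiableAt)
    intro x hx
    have hMx : ‖fderiv ℝ (vfX f₁ f₂ g₁ g₂) x‖ ≤ max M 0 := le_max_of_le_left (hM x hx)
    exact hMx
  have hmem : ∀ t (x : ℝ × ℝ), (clampX (n:ℝ) t, clamp2X r x) ∈ S := by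
    intro t x
    exact ⟨clampX_mem (Nat.cast_nonneg n) t, clampX_mem hr x.1, clampX_mem hr x.2⟩
  refine ⟨K, fun t => LipschitzWith.of_dist_le_mul fun x y => ?_⟩
  have h5 : dist (vmodX f₁ f₂ g₁ g₂ r n t x) (vmodX f₁ f₂ g₁ g₂ r n t y) ≤
      K * dist ((clampX (n:ℝ) t, clamp2X r x)) ((clampX (n:ℝ) t, clamp2X r y)) :=
    hlip.dist_le_mul _ (hmem t x) _ (hmem t y)
  have h6 : dist ((clampX (n:ℝ) t, clamp2X r x)) ((clampX (n:ℝ) t, clamp2X r y)) =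
      dist (clamp2X r x) (clamp2X r y) := by
    rw [Prod.dist_eq, dist_self, max_eq_right dist_nonneg]
  have h7 : dist (clamp2X r x) (clamp2X r y) ≤ dist x y := by
    simpa using (clamp2X_lipschitz r).dist_le_mul x y
  calc dist (vmodX f₁ f₂ g₁ g₂ r n t x) (vmodX f₁ f₂ g₁ g₂ r n t y)
      ≤ K * dist (clamp2X r x) (clamp2X r y) := by rw [← h6]; exact h5
    _ ≤ K * dist x y := mul_le_mul_of_nonneg_left h7 K.coe_nonneg

lemma vmodX_bound (hb1 : ∀ p, |f₁ p| ≤ 1) (hb2 : ∀ p, |f₂ p| ≤ 1)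
    (hb3 : ∀ p, |g₁ p| ≤ 1) (hb4 : ∀ p, |g₂ p| ≤ 1)
    {r : ℝ} (hr : 0 ≤ r) (n : ℕ) (t : ℝ) (x : ℝ × ℝ) :
    ‖vmodX f₁ f₂ g₁ g₂ r n t x‖ ≤ 3 * r := by
  obtain ⟨ha1, ha2⟩ := clampX_mem hr x.1
  obtain ⟨hb1', hb2'⟩ := clampX_mem hr x.2
  have habs1 : |clampX r x.1| ≤ r := abs_le.2 ⟨ha1, ha2⟩
  have habs2 : |clampX r x.2| ≤ r := abs_le.2 ⟨hb1', hb2'⟩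
  rw [Prod.norm_def]
  apply max_le <;> rw [Real.norm_eq_abs]
  · refine le_trans (abs_add_le _ _) ?_
    have e1 : |clampX r x.1 * (1 + f₁ (clampX r x.1, clampX r x.2, clampX (n:ℝ) t))| ≤ r * 2 := by
      rw [abs_mul]
      refine mul_le_mul habs1 ?_ (abs_nonneg _) hr
      refine le_trans (abs_add_le _ _) ?_
      simp only [abs_one]
      linarith [hb1 (clampX r x.1, clampX r x.2, clampX (n:ℝ) t)]
    have e2 : |f₂ (clampX r x.1, clampX r x.2, clampX (n:ℝ) t) * clampX r x.2| ≤ 1 * r := by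
      rw [abs_mul]
      exact mul_le_mul (hb2 _) habs2 (abs_nonneg _) zero_le_one
    simp only [vmodX, vfX, clamp2X]
    linarith [e1, e2]
  · refine le_trans (abs_add_le _ _) ?_
    have e1 : |-clampX r x.2 * (1 + g₁ (clampX r x.1, clampX r x.2, clampX (n:ℝ) t))| ≤ r * 2 := by
      rw [abs_mul, abs_neg]
      refine mul_le_mul habs2 ?_ (abs_nonneg _) hr
      refine le_trans (abs_add_le _ _) ?_
      simp only [abs_one]
      linarith [hb3 (clampX r x.1, clampX r x.2, clampX (n:ℝ) t)]
    have e2 : |g₂ (clampX r x.1, clampX r x.2, clampX (n:ℝ) t) * clampX r x.1| ≤ 1 * r := by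
      rw [abs_mul]
      exact mul_le_mul (hb4 _) habs1 (abs_nonneg _) zero_le_one
    simp only [vmodX, vfX, clamp2X]
    linarith [e1, e2]

/-- Inside the cone, `β' ≤ -(1/2) β` and `β' ≥ -2 β`. -/
lemma vfX_snd_bounds (hb3 : ∀ p, |g₁ p| ≤ 1/8) (hb4 : ∀ p, |g₂ p| ≤ 1/8)
    {t : ℝ} {x : ℝ × ℝ} (hx : |x.1| ≤ x.2) :
    (vfX f₁ f₂ g₁ g₂ (t, x)).2 ≤ -(1/2) * x.2 ∧ -2 * x.2 ≤ (vfX f₁ f₂ g₁ g₂ (t, x)).2 := by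
  obtain ⟨h1, h2⟩ := abs_le.1 hx
  have hB : 0 ≤ x.2 := le_trans (abs_nonneg _) hx
  obtain ⟨hg1a, hg1b⟩ := abs_le.1 (hb3 (x.1, x.2, t))
  obtain ⟨hg2a, hg2b⟩ := abs_le.1 (hb4 (x.1, x.2, t))
  simp only [vfX]
  constructor <;>
    nlinarith [mul_nonneg (by linarith : (0:ℝ) ≤ 1/8 - g₂ (x.1, x.2, t)) (by linarith : 0 ≤ x.2 - x.1),
      mul_nonneg (by linarith : (0:ℝ) ≤ 1/8 + g₂ (x.1, x.2, t)) (by linarith : 0 ≤ x.2 + x.1),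
      mul_nonneg (by linarith : (0:ℝ) ≤ 1/8 - g₂ (x.1, x.2, t)) (by linarith : 0 ≤ x.2 + x.1),
      mul_nonneg (by linarith : (0:ℝ) ≤ 1/8 + g₂ (x.1, x.2, t)) (by linarith : 0 ≤ x.2 - x.1),
      mul_nonneg (by linarith : (0:ℝ) ≤ 1/8 - g₁ (x.1, x.2, t)) hB,
      mul_nonneg (by linarith : (0:ℝ) ≤ 1/8 + g₁ (x.1, x.2, t)) hB]

/-- On the right boundary `α = β` of the cone, `(α - β)' ≥ (3/2) β`. -/
lemma vfX_u_bound (hb1 : ∀ p, |f₁ p| ≤ 1/8) (hb2 : ∀ p, |f₂ p| ≤ 1/8)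
    (hb3 : ∀ p, |g₁ p| ≤ 1/8) (hb4 : ∀ p, |g₂ p| ≤ 1/8)
    {t : ℝ} {x : ℝ × ℝ} (hx : x.1 = x.2) (hB : 0 ≤ x.2) :
    3/2 * x.2 ≤ (vfX f₁ f₂ g₁ g₂ (t, x)).1 - (vfX f₁ f₂ g₁ g₂ (t, x)).2 := by
  obtain ⟨ha1, ha2⟩ := abs_le.1 (hb1 (x.2, x.2, t))
  obtain ⟨hc1, hc2⟩ := abs_le.1 (hb2 (x.2, x.2, t))
  obtain ⟨hg1a, hg1b⟩ := abs_le.1 (hb3 (x.2, x.2, t))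
  obtain ⟨hg2a, hg2b⟩ := abs_le.1 (hb4 (x.2, x.2, t))
  simp only [vfX]
  rw [hx]
  nlinarith [mul_nonneg (by linarith : (0:ℝ) ≤ 1/8 + f₁ (x.2, x.2, t)) hB,
    mul_nonneg (by linarith : (0:ℝ) ≤ 1/8 + f₂ (x.2, x.2, t)) hB,
    mul_nonneg (by linarith : (0:ℝ) ≤ 1/8 + g₁ (x.2, x.2, t)) hB,
    mul_nonneg (by linarith : (0:ℝ) ≤ 1/8 - g₂ (x.2, x.2, t)) hB]

/-- On the left boundary `α = -β` of the cone, `(α + β)' ≤ -(3/2) β`. -/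
lemma vfX_w_bound (hb1 : ∀ p, |f₁ p| ≤ 1/8) (hb2 : ∀ p, |f₂ p| ≤ 1/8)
    (hb3 : ∀ p, |g₁ p| ≤ 1/8) (hb4 : ∀ p, |g₂ p| ≤ 1/8)
    {t : ℝ} {x : ℝ × ℝ} (hx : x.1 = -x.2) (hB : 0 ≤ x.2) :
    (vfX f₁ f₂ g₁ g₂ (t, x)).1 + (vfX f₁ f₂ g₁ g₂ (t, x)).2 ≤ -(3/2) * x.2 := by
  obtain ⟨ha1, ha2⟩ := abs_le.1 (hb1 (-x.2, x.2, t))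
  obtain ⟨hc1, hc2⟩ := abs_le.1 (hb2 (-x.2, x.2, t))
  obtain ⟨hg1a, hg1b⟩ := abs_le.1 (hb3 (-x.2, x.2, t))
  obtain ⟨hg2a, hg2b⟩ := abs_le.1 (hb4 (-x.2, x.2, t))
  simp only [vfX]
  rw [hx]
  nlinarith [mul_nonneg (by linarith : (0:ℝ) ≤ 1/8 - f₁ (-x.2, x.2, t)) hB,
    mul_nonneg (by linarith : (0:ℝ) ≤ 1/8 - f₂ (-x.2, x.2, t)) hB,
    mul_nonneg (by linarith : (0:ℝ) ≤ 1/8 - g₁ (-x.2, x.2, t)) hB,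
    mul_nonneg (by linarith : (0:ℝ) ≤ 1/8 - g₂ (-x.2, x.2, t)) hB]



lemma vmodX_exists_sol (h1 : ContDiff ℝ 1 f₁) (h2 : ContDiff ℝ 1 f₂)
    (h3 : ContDiff ℝ 1 g₁) (h4 : ContDiff ℝ 1 g₂)
    {r : ℝ} (hr : 0 ≤ r)
    (hbound : ∀ (n : ℕ) (t : ℝ) (x : ℝ × ℝ), ‖vmodX f₁ f₂ g₁ g₂ r n t x‖ ≤ 3 * r)
    (n : ℕ) (x₀ : ℝ × ℝ) (K : ℝ≥0)
    (hK : ∀ t, LipschitzWith K (vmodX f₁ f₂ g₁ g₂ r n t)) :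
    ∃ sol : ℝ → ℝ × ℝ, sol 0 = x₀ ∧ ∀ t ∈ Icc (0:ℝ) (n:ℝ),
      HasDerivWithinAt sol (vmodX f₁ f₂ g₁ g₂ r n t (sol t)) (Icc (0:ℝ) (n:ℝ)) t := by
  apply IsPicardLindelof.exists_eq_forall_mem_Icc_hasDerivWithinAt₀
    (t₀ := ⟨0, ⟨le_rfl, Nat.cast_nonneg n⟩⟩) (x₀ := x₀)
    (a := ⟨3 * r * n + 1, by positivity⟩) (L := ⟨3 * r, by positivity⟩) (K := K)
  have hvcont : Continuous (vfX f₁ f₂ g₁ g₂) := by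
    have hq : Continuous (fun p : ℝ × (ℝ × ℝ) => (p.2.1, p.2.2, p.1)) :=
      (continuous_snd.fst).prodMk ((continuous_snd.snd).prodMk continuous_fst)
    have c1 := h1.continuous.comp hq
    have c2 := h2.continuous.comp hq
    have c3 := h3.continuous.comp hq
    have c4 := h4.continuous.comp hq
    unfold vfX
    exact ((continuous_snd.fst.mul (continuous_const.add c1)).add
      (c2.mul continuous_snd.snd)).prodMk
      ((continuous_snd.snd.neg.mul (continuous_const.add c3)).add
      (c4.mul continuous_snd.fst))
  have hclamp : Continuous (clampX (n:ℝ)) := by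
    unfold clampX
    exact (continuous_id.min continuous_const).max continuous_const
  constructor
  · exact fun t _ => (hK t).lipschitzOnWith
  · intro x _
    apply Continuous.continuousOn
    exact hvcont.comp (hclamp.prodMk continuous_const)
  · exact fun t _ x _ => hbound n t x
  · show (3 * r) * max ((n:ℝ) - 0) (0 - 0) ≤ (3 * r * n + 1) - ((0:ℝ≥0):ℝ)
    simp only [sub_zero, NNReal.coe_zero]
    rw [max_eq_left (Nat.cast_nonneg n)]
    nlinarith [mul_nonneg (mul_nonneg (by norm_num : (0:ℝ) ≤ 3) hr) (Nat.cast_nonneg n)]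



end AuxVF

/-- Lemma 3.1: for any `C¹`-small perturbation of the hyperbolic system
`α' = α`, `β' = -β`, every neighborhood of the origin contains initial data
whose trajectory decays like `e^{-t/2}`. -/
theorem stmt_7 :
    ∃ ε₀ : ℝ, 0 < ε₀ ∧
      ∀ f₁ f₂ g₁ g₂ : ℝ × ℝ × ℝ → ℝ,
        ContDiff ℝ 1 f₁ → ContDiff ℝ 1 f₂ → ContDiff ℝ 1 g₁ → ContDiff ℝ 1 g₂ →
        (∀ p, |f₁ p| < ε₀) → (∀ p, |f₂ p| < ε₀) →
        (∀ p, |g₁ p| < ε₀) → (∀ p, |g₂ p| < ε₀) →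
        ∀ r : ℝ, 0 < r →
          ∃ (α₀ β₀ : ℝ) (α β : ℝ → ℝ),
            0 < β₀ ∧ α₀ ^ 2 + β₀ ^ 2 < r ^ 2 ∧ α 0 = α₀ ∧ β 0 = β₀ ∧
            ∀ t : ℝ, 0 ≤ t →
              HasDerivWithinAt α
                (α t * (1 + f₁ (α t, β t, t)) + f₂ (α t, β t, t) * β t)
                (Set.Ici 0) t ∧
              HasDerivWithinAt β
                (-(β t) * (1 + g₁ (α t, β t, t)) + g₂ (α t, β t, t) * α t)
                (Set.Ici 0) t ∧
              |α t| ≤ Real.exp (-t / 2) * β₀ ∧ |β t| ≤ Real.exp (-t / 2) * β₀ := by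
  refine ⟨1/8, by norm_num, ?_⟩
  intro f₁ f₂ g₁ g₂ hc₁ hc₂ hc₃ hc₄ hs₁ hs₂ hs₃ hs₄ r hr
  have hb1 : ∀ p, |f₁ p| ≤ 1/8 := fun p => (hs₁ p).le
  have hb2 : ∀ p, |f₂ p| ≤ 1/8 := fun p => (hs₂ p).le
  have hb3 : ∀ p, |g₁ p| ≤ 1/8 := fun p => (hs₃ p).le
  have hb4 : ∀ p, |g₂ p| ≤ 1/8 := fun p => (hs₄ p).le
  have hb1' : ∀ p, |f₁ p| ≤ 1 := fun p => le_trans (hb1 p) (by norm_num)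
  have hb2' : ∀ p, |f₂ p| ≤ 1 := fun p => le_trans (hb2 p) (by norm_num)
  have hb3' : ∀ p, |g₁ p| ≤ 1 := fun p => le_trans (hb3 p) (by norm_num)
  have hb4' : ∀ p, |g₂ p| ≤ 1 := fun p => le_trans (hb4 p) (by norm_num)
  have hrpos : (0:ℝ) ≤ r := hr.le
  set b₀ : ℝ := r / 2 with hb₀def
  have hb₀ : 0 < b₀ := by rw [hb₀def]; positivity
  have hb₀r : b₀ ≤ r := by rw [hb₀def]; linarith
  -- Lipschitz constants for the modified fields
  choose Kf hKf using fun n => vmodX_lipschitz f₁ f₂ g₁ g₂ hc₁ hc₂ hc₃ hc₄ r hrpos n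
  have hbound := vmodX_bound f₁ f₂ g₁ g₂ hb1' hb2' hb3' hb4' hrpos
  -- solutions of the modified system
  choose sol hsol0 hsold using fun (n : ℕ) (a : ℝ) =>
    vmodX_exists_sol f₁ f₂ g₁ g₂ hc₁ hc₂ hc₃ hc₄ hrpos hbound n (a, b₀) (Kf n) (hKf n)
  have hsold' : ∀ (n : ℕ) (a : ℝ), ∀ t ∈ Ico (0:ℝ) (n:ℝ),
      HasDerivWithinAt (sol n a) (vmodX f₁ f₂ g₁ g₂ r n t (sol n a t)) (Ici t) t := by
    intro n a t ht
    refine (hsold n a t ⟨ht.1, ht.2.le⟩).mono_of_mem_nhdsWithin ?_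
    refine mem_of_superset (inter_mem_nhdsWithin (Ici t) (Iio_mem_nhds ht.2)) ?_
    intro z hz
    exact ⟨le_trans ht.1 hz.1, hz.2.le⟩
  have hsolc : ∀ (n : ℕ) (a : ℝ), ContinuousOn (sol n a) (Icc (0:ℝ) (n:ℝ)) :=
    fun n a t ht => (hsold n a t ht).continuousWithinAt
  have hvmod_agree : ∀ (m n : ℕ), (m:ℝ) ≤ (n:ℝ) → ∀ t ∈ Icc (0:ℝ) (m:ℝ), ∀ x : ℝ × ℝ,
      vmodX f₁ f₂ g₁ g₂ r n t x = vmodX f₁ f₂ g₁ g₂ r m t x := by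
    intro m n hmn t ht x
    unfold vmodX
    rw [clampX_eq (abs_le.2 ⟨by linarith [ht.1, Nat.cast_nonneg (α := ℝ) n], le_trans ht.2 hmn⟩),
        clampX_eq (abs_le.2 ⟨by linarith [ht.1, Nat.cast_nonneg (α := ℝ) m], ht.2⟩)]
  have hconsist : ∀ (m n : ℕ) (a : ℝ), m ≤ n → ∀ t ∈ Icc (0:ℝ) (m:ℝ),
      sol m a t = sol n a t := by
    intro m n a hmn
    have hmn' : (m:ℝ) ≤ (n:ℝ) := Nat.cast_le.2 hmn
    refine ODE_solution_unique (v := vmodX f₁ f₂ g₁ g₂ r m) (fun t => hKf m t)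
      (hsolc m a) (hsold' m a)
      ((hsolc n a).mono (Icc_subset_Icc_right hmn')) ?_ ?_
    · intro t ht
      have h1 := hsold' n a t ⟨ht.1, lt_of_lt_of_le ht.2 hmn'⟩
      rwa [hvmod_agree m n hmn' t ⟨ht.1, ht.2.le⟩] at h1
    · rw [hsol0, hsol0]
  set traj : ℝ → ℝ → ℝ × ℝ := fun a t => sol (⌈t⌉₊ + 1) a t with htrajdef
  have hceil : ∀ t : ℝ, t ≤ ((⌈t⌉₊ + 1 : ℕ) : ℝ) := by
    intro t
    push_cast
    linarith [Nat.le_ceil t]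
  have hceil' : ∀ t : ℝ, t < ((⌈t⌉₊ + 1 : ℕ) : ℝ) := by
    intro t
    push_cast
    linarith [Nat.le_ceil t]
  have htraj_eq : ∀ (n : ℕ) (a : ℝ), ∀ t ∈ Icc (0:ℝ) (n:ℝ), traj a t = sol n a t := by
    intro n a t ht
    rcases le_total (⌈t⌉₊ + 1) n with h | h
    · exact hconsist _ n a h t ⟨ht.1, hceil t⟩
    · exact (hconsist n _ a h t ht).symm
  have htraj0 : ∀ a : ℝ, traj a 0 = (a, b₀) := fun a => hsol0 _ a
  have htrajd : ∀ (a t : ℝ), 0 ≤ t →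
      HasDerivWithinAt (traj a) (vmodX f₁ f₂ g₁ g₂ r (⌈t⌉₊ + 1) t (traj a t)) (Ici 0) t := by
    intro a t ht
    have htmem : t ∈ Icc (0:ℝ) ((⌈t⌉₊ + 1 : ℕ) : ℝ) := ⟨ht, hceil t⟩
    have h1 := hsold (⌈t⌉₊ + 1) a t htmem
    have h2 : HasDerivWithinAt (traj a)
        (vmodX f₁ f₂ g₁ g₂ r (⌈t⌉₊ + 1) t (sol (⌈t⌉₊ + 1) a t))
        (Icc (0:ℝ) ((⌈t⌉₊ + 1 : ℕ) : ℝ)) t :=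
      h1.congr (fun z hz => htraj_eq _ a z hz) (htraj_eq _ a t htmem)
    rw [show sol (⌈t⌉₊ + 1) a t = traj a t from (htraj_eq _ a t htmem).symm] at h2
    refine h2.mono_of_mem_nhdsWithin ?_
    refine mem_of_superset (inter_mem_nhdsWithin (Ici 0) (Iio_mem_nhds (hceil' t))) ?_
    exact fun z hz => ⟨hz.1, hz.2.le⟩
  have htrajc : ∀ a : ℝ, ContinuousOn (traj a) (Ici 0) :=
    fun a t ht => (htrajd a t ht).continuousWithinAt
  have hcontdep : ∀ (n : ℕ) (a a' : ℝ), ∀ t ∈ Icc (0:ℝ) (n:ℝ),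
      dist (traj a t) (traj a' t) ≤ dist a a' * Real.exp ((Kf n : ℝ) * t) := by
    intro n a a' t ht
    have h0 : dist (sol n a 0) (sol n a' 0) ≤ dist a a' := by
      rw [hsol0, hsol0]
      refine le_of_eq ?_
      rw [Prod.dist_eq, dist_self]
      exact max_eq_left dist_nonneg
    have h1 := dist_le_of_trajectories_ODE (v := vmodX f₁ f₂ g₁ g₂ r n) (fun t => hKf n t)
      (hsolc n a) (hsold' n a) (hsolc n a') (hsold' n a') h0 t ht
    rw [htraj_eq n a t ht, htraj_eq n a' t ht]
    simpa using h1
  have hcomp : ∀ x y : ℝ × ℝ, |x.1 - y.1| ≤ dist x y ∧ |x.2 - y.2| ≤ dist x y := by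
    intro x y
    rw [Prod.dist_eq]
    constructor
    · rw [← Real.dist_eq]; exact le_max_left _ _
    · rw [← Real.dist_eq]; exact le_max_right _ _
  -- derivative formula at "good" points (inside the cone and below height b₀)
  have htrajdg : ∀ (a t : ℝ), 0 ≤ t → |(traj a t).1| ≤ (traj a t).2 → (traj a t).2 ≤ b₀ →
      HasDerivWithinAt (traj a) (vfX f₁ f₂ g₁ g₂ (t, traj a t)) (Ici 0) t := by
    intro a t ht h1 h2
    have hB0 : 0 ≤ (traj a t).2 := le_trans (abs_nonneg _) h1
    have h3 := htrajd a t ht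
    rwa [vmodX_eq_vfX f₁ f₂ g₁ g₂ (by rw [abs_of_nonneg ht]; exact hceil t)
      (le_trans h1 (le_trans h2 hb₀r))
      (by rw [abs_of_nonneg hB0]; exact le_trans h2 hb₀r)] at h3
  -- Grönwall estimates along trajectories that stay good
  have hGron : ∀ (a τ : ℝ), 0 ≤ τ →
      (∀ s ∈ Icc (0:ℝ) τ, |(traj a s).1| ≤ (traj a s).2 ∧ (traj a s).2 ≤ b₀) →
      ∀ s ∈ Icc (0:ℝ) τ, b₀ * Real.exp (-2 * s) ≤ (traj a s).2 ∧
        (traj a s).2 ≤ b₀ * Real.exp (-(1/2) * s) := by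
    intro a τ hτ hgood
    have hBc : ContinuousOn (fun s => (traj a s).2) (Icc 0 τ) :=
      continuous_snd.comp_continuousOn ((htrajc a).mono (fun z hz => hz.1))
    have hBd : ∀ s ∈ Ico (0:ℝ) τ, HasDerivWithinAt (fun z => (traj a z).2)
        ((vfX f₁ f₂ g₁ g₂ (s, traj a s)).2) (Ici s) s := by
      intro s hs
      have hg := hgood s ⟨hs.1, hs.2.le⟩
      exact (hasDerivWithinAt_snd_aux (htrajdg a s hs.1 hg.1 hg.2)).mono
        (Ici_subset_Ici.2 hs.1)
    have hbndlow : ∀ t ∈ Ico (0:ℝ) τ,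
        -((vfX f₁ f₂ g₁ g₂ (t, traj a t)).2) ≤ -2 * -((traj a t).2) := by
      intro t ht
      have hg := hgood t ⟨ht.1, ht.2.le⟩
      have hineq := (vfX_snd_bounds f₁ f₂ g₁ g₂ (t := t) hb3 hb4 hg.1).2
      linarith
    have hbndup : ∀ t ∈ Ico (0:ℝ) τ,
        (vfX f₁ f₂ g₁ g₂ (t, traj a t)).2 ≤ -(1/2) * (traj a t).2 :=
      fun t ht => (vfX_snd_bounds f₁ f₂ g₁ g₂ (t := t) hb3 hb4 (hgood t ⟨ht.1, ht.2.le⟩).1).1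
    intro s hs
    constructor
    · have hlow := scalar_gronwall_aux (f := fun z => -(traj a z).2)
        (f' := fun z => -((vfX f₁ f₂ g₁ g₂ (z, traj a z)).2)) (K := -2) (δ := -b₀) (b := τ)
        hBc.neg (fun t ht => (hBd t ht).neg)
        (by show -(traj a 0).2 ≤ -b₀; rw [htraj0])
        (fun t ht => hbndlow t ht) s hs
      have hlow' : -(traj a s).2 ≤ -b₀ * Real.exp (-2 * s) := hlow
      have heq : -b₀ * Real.exp (-2 * s) = -(b₀ * Real.exp (-2 * s)) := by ring
      rw [heq] at hlow'
      linarith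
    · exact scalar_gronwall_aux (f := fun z => (traj a z).2)
        (f' := fun z => (vfX f₁ f₂ g₁ g₂ (z, traj a z)).2) (K := -(1/2)) (δ := b₀) (b := τ)
        hBc hBd (by show (traj a 0).2 ≤ b₀; rw [htraj0])
        (fun t ht => hbndup t ht) s hs
  -- exit sets
  set SA : Set ℝ := {a | ∃ τ, 0 ≤ τ ∧ (traj a τ).2 < (traj a τ).1 ∧
      ∀ s ∈ Icc (0:ℝ) τ, 0 < (traj a s).1 + (traj a s).2} with hSAdef
  set SB : Set ℝ := {a | ∃ τ, 0 ≤ τ ∧ (traj a τ).1 < -(traj a τ).2 ∧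
      ∀ s ∈ Icc (0:ℝ) τ, (traj a s).1 < (traj a s).2} with hSBdef
  have hcaseA : ∀ (a T : ℝ), 0 ≤ T →
      (∀ s ∈ Icc (0:ℝ) T, |(traj a s).1| ≤ (traj a s).2 ∧ (traj a s).2 ≤ b₀) →
      (traj a T).1 = (traj a T).2 → a ∈ SA := by
    intro a T hT hgood hu
    have hBT : 0 < (traj a T).2 :=
      lt_of_lt_of_le (mul_pos hb₀ (Real.exp_pos _)) ((hGron a T hT hgood T ⟨hT, le_rfl⟩).1)
    have hw : ∀ s ∈ Icc (0:ℝ) T, 0 < (traj a s).1 + (traj a s).2 := by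
      intro s hsmem
      have hg := hgood s hsmem
      have h01 := (abs_le.1 hg.1).1
      have h0 : 0 ≤ (traj a s).1 + (traj a s).2 := by linarith
      rcases h0.lt_or_eq with h | h
      · exact h
      exfalso
      have hAeq : (traj a s).1 = -(traj a s).2 := by linarith
      have hBs : 0 < (traj a s).2 :=
        lt_of_lt_of_le (mul_pos hb₀ (Real.exp_pos _)) ((hGron a T hT hgood s hsmem).1)
      have hderiv := htrajdg a s hsmem.1 hg.1 hg.2
      have hwd : HasDerivWithinAt (fun z => (traj a z).1 + (traj a z).2)
          ((vfX f₁ f₂ g₁ g₂ (s, traj a s)).1 + (vfX f₁ f₂ g₁ g₂ (s, traj a s)).2) (Ici s) s :=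
        ((hasDerivWithinAt_fst_aux hderiv).add (hasDerivWithinAt_snd_aux hderiv)).mono
          (Ici_subset_Ici.2 hsmem.1)
      have hwneg : (vfX f₁ f₂ g₁ g₂ (s, traj a s)).1 + (vfX f₁ f₂ g₁ g₂ (s, traj a s)).2 < 0 := by
        have hwb := vfX_w_bound f₁ f₂ g₁ g₂ (t := s) hb1 hb2 hb3 hb4 hAeq hBs.le
        nlinarith
      have hev := right_deriv_neg_aux hwd hwneg
      rcases eq_or_lt_of_le hsmem.2 with hsT | hsT
      · rw [hsT] at h
        linarith
      · have hIoo : Ioo s T ∈ 𝓝[>] s := by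
          rw [← Ioi_inter_Iio]
          exact inter_mem self_mem_nhdsWithin (mem_nhdsWithin_of_mem_nhds (Iio_mem_nhds hsT))
        obtain ⟨z, hz1, hz2⟩ := (hev.and (eventually_of_mem hIoo (fun z hz => hz))).exists
        have hz1' : (traj a z).1 + (traj a z).2 < (traj a s).1 + (traj a s).2 := hz1
        have hgz := hgood z ⟨le_trans hsmem.1 hz2.1.le, hz2.2.le⟩
        have h02 := (abs_le.1 hgz.1).1
        linarith
    have hgT := hgood T ⟨hT, le_rfl⟩
    have hderivT := htrajdg a T hT hgT.1 hgT.2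
    have hud : HasDerivWithinAt (fun z => (traj a z).1 - (traj a z).2)
        ((vfX f₁ f₂ g₁ g₂ (T, traj a T)).1 - (vfX f₁ f₂ g₁ g₂ (T, traj a T)).2) (Ici T) T :=
      ((hasDerivWithinAt_fst_aux hderivT).sub (hasDerivWithinAt_snd_aux hderivT)).mono
        (Ici_subset_Ici.2 hT)
    have hupos : 0 < (vfX f₁ f₂ g₁ g₂ (T, traj a T)).1 - (vfX f₁ f₂ g₁ g₂ (T, traj a T)).2 := by
      have hub := vfX_u_bound f₁ f₂ g₁ g₂ (t := T) hb1 hb2 hb3 hb4 hu (le_trans (abs_nonneg _) hgT.1)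
      nlinarith
    have hev := right_deriv_pos_aux hud hupos
    have hwT : 0 < (traj a T).1 + (traj a T).2 := hw T ⟨hT, le_rfl⟩
    have hwcont : ContinuousWithinAt (fun z => (traj a z).1 + (traj a z).2) (Ici 0) T :=
      (((continuous_fst.comp_continuousOn (htrajc a)).add
        (continuous_snd.comp_continuousOn (htrajc a))) T hT)
    have hevw' : ∀ᶠ z in 𝓝[Ici 0] T, 0 < (traj a z).1 + (traj a z).2 :=
      hwcont.eventually (lt_mem_nhds hwT)
    rw [eventually_iff, Metric.mem_nhdsWithin_iff] at hevw'
    obtain ⟨ε, hε, hball⟩ := hevw'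
    have hwplus : ∀ s ∈ Icc (0:ℝ) (T + ε/2), 0 < (traj a s).1 + (traj a s).2 := by
      intro s hsmem
      rcases le_or_gt s T with hle | hgt
      · exact hw s ⟨hsmem.1, hle⟩
      · refine hball ⟨?_, hsmem.1⟩
        rw [mem_ball, Real.dist_eq, abs_of_pos (by linarith : (0:ℝ) < s - T)]
        linarith [hsmem.2, hε]
    have hIio : Iio (T + ε/2) ∈ 𝓝[>] T :=
      mem_nhdsWithin_of_mem_nhds (Iio_mem_nhds (by linarith))
    obtain ⟨τ, hτ1, hτ2, hτ3⟩ :=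
      (hev.and ((eventually_of_mem hIio (fun z hz => hz)).and
        (eventually_of_mem self_mem_nhdsWithin (fun z hz => hz)))).exists
    have hτ1' : (traj a T).1 - (traj a T).2 < (traj a τ).1 - (traj a τ).2 := hτ1
    have hτ3' : T < τ := hτ3
    refine ⟨τ, le_trans hT hτ3'.le, by linarith, ?_⟩
    intro s hsmem
    exact hwplus s ⟨hsmem.1, le_trans hsmem.2 (le_of_lt hτ2)⟩
  have hcaseB : ∀ (a T : ℝ), 0 ≤ T →
      (∀ s ∈ Icc (0:ℝ) T, |(traj a s).1| ≤ (traj a s).2 ∧ (traj a s).2 ≤ b₀) →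
      (traj a T).1 = -(traj a T).2 → a ∈ SB := by
    intro a T hT hgood hu
    have hBT : 0 < (traj a T).2 :=
      lt_of_lt_of_le (mul_pos hb₀ (Real.exp_pos _)) ((hGron a T hT hgood T ⟨hT, le_rfl⟩).1)
    have hw : ∀ s ∈ Icc (0:ℝ) T, (traj a s).1 < (traj a s).2 := by
      intro s hsmem
      have hg := hgood s hsmem
      have h0 : (traj a s).1 ≤ (traj a s).2 := (abs_le.1 hg.1).2
      rcases lt_or_eq_of_le h0 with h | h
      · exact h
      exfalso
      have hBs : 0 < (traj a s).2 :=
        lt_of_lt_of_le (mul_pos hb₀ (Real.exp_pos _)) ((hGron a T hT hgood s hsmem).1)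
      have hderiv := htrajdg a s hsmem.1 hg.1 hg.2
      have hud : HasDerivWithinAt (fun z => (traj a z).1 - (traj a z).2)
          ((vfX f₁ f₂ g₁ g₂ (s, traj a s)).1 - (vfX f₁ f₂ g₁ g₂ (s, traj a s)).2) (Ici s) s :=
        ((hasDerivWithinAt_fst_aux hderiv).sub (hasDerivWithinAt_snd_aux hderiv)).mono
          (Ici_subset_Ici.2 hsmem.1)
      have hupos : 0 < (vfX f₁ f₂ g₁ g₂ (s, traj a s)).1 - (vfX f₁ f₂ g₁ g₂ (s, traj a s)).2 := by
        have hub := vfX_u_bound f₁ f₂ g₁ g₂ (t := s) hb1 hb2 hb3 hb4 h hBs.le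
        nlinarith
      have hev := right_deriv_pos_aux hud hupos
      rcases eq_or_lt_of_le hsmem.2 with hsT | hsT
      · rw [hsT] at h
        linarith
      · have hIoo : Ioo s T ∈ 𝓝[>] s := by
          rw [← Ioi_inter_Iio]
          exact inter_mem self_mem_nhdsWithin (mem_nhdsWithin_of_mem_nhds (Iio_mem_nhds hsT))
        obtain ⟨z, hz1, hz2⟩ := (hev.and (eventually_of_mem hIoo (fun z hz => hz))).exists
        have hz1' : (traj a s).1 - (traj a s).2 < (traj a z).1 - (traj a z).2 := hz1
        have hgz := hgood z ⟨le_trans hsmem.1 hz2.1.le, hz2.2.le⟩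
        have h02 := (abs_le.1 hgz.1).2
        linarith
    have hgT := hgood T ⟨hT, le_rfl⟩
    have hderivT := htrajdg a T hT hgT.1 hgT.2
    have hwd : HasDerivWithinAt (fun z => (traj a z).1 + (traj a z).2)
        ((vfX f₁ f₂ g₁ g₂ (T, traj a T)).1 + (vfX f₁ f₂ g₁ g₂ (T, traj a T)).2) (Ici T) T :=
      ((hasDerivWithinAt_fst_aux hderivT).add (hasDerivWithinAt_snd_aux hderivT)).mono
        (Ici_subset_Ici.2 hT)
    have hwneg : (vfX f₁ f₂ g₁ g₂ (T, traj a T)).1 + (vfX f₁ f₂ g₁ g₂ (T, traj a T)).2 < 0 := by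
      have hwb := vfX_w_bound f₁ f₂ g₁ g₂ (t := T) hb1 hb2 hb3 hb4 hu hBT.le
      nlinarith
    have hev := right_deriv_neg_aux hwd hwneg
    have huT : (traj a T).1 - (traj a T).2 < 0 := by linarith
    have hucont : ContinuousWithinAt (fun z => (traj a z).1 - (traj a z).2) (Ici 0) T :=
      (((continuous_fst.comp_continuousOn (htrajc a)).sub
        (continuous_snd.comp_continuousOn (htrajc a))) T hT)
    have hevu' : ∀ᶠ z in 𝓝[Ici 0] T, (traj a z).1 - (traj a z).2 < 0 :=
      hucont.eventually (gt_mem_nhds huT)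
    rw [eventually_iff, Metric.mem_nhdsWithin_iff] at hevu'
    obtain ⟨ε, hε, hball⟩ := hevu'
    have huminus : ∀ s ∈ Icc (0:ℝ) (T + ε/2), (traj a s).1 < (traj a s).2 := by
      intro s hsmem
      rcases le_or_gt s T with hle | hgt
      · exact hw s ⟨hsmem.1, hle⟩
      · have hmem : s ∈ {z | (traj a z).1 - (traj a z).2 < 0} := by
          refine hball ⟨?_, hsmem.1⟩
          rw [mem_ball, Real.dist_eq, abs_of_pos (by linarith : (0:ℝ) < s - T)]
          linarith [hsmem.2, hε]
        have hmem' : (traj a s).1 - (traj a s).2 < 0 := hmem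
        linarith
    have hIio : Iio (T + ε/2) ∈ 𝓝[>] T :=
      mem_nhdsWithin_of_mem_nhds (Iio_mem_nhds (by linarith))
    obtain ⟨τ, hτ1, hτ2, hτ3⟩ :=
      (hev.and ((eventually_of_mem hIio (fun z hz => hz)).and
        (eventually_of_mem self_mem_nhdsWithin (fun z hz => hz)))).exists
    have hτ1' : (traj a τ).1 + (traj a τ).2 < (traj a T).1 + (traj a T).2 := hτ1
    have hτ3' : T < τ := hτ3
    refine ⟨τ, le_trans hT hτ3'.le, by linarith, ?_⟩
    intro s hsmem
    exact huminus s ⟨hsmem.1, le_trans hsmem.2 (le_of_lt hτ2)⟩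
  -- openness of the exit sets
  have hSAopen : IsOpen SA := by
    rw [Metric.isOpen_iff]
    rintro a ⟨τ, hτ0, hτu, hτw⟩
    have hτn : τ ≤ ((⌈τ⌉₊ + 1 : ℕ) : ℝ) := hceil τ
    set n : ℕ := ⌈τ⌉₊ + 1 with hn
    have hwc : ContinuousOn (fun s => (traj a s).1 + (traj a s).2) (Icc 0 τ) :=
      ((continuous_fst.comp_continuousOn (htrajc a)).add
        (continuous_snd.comp_continuousOn (htrajc a))).mono (fun z hz => hz.1)
    obtain ⟨s₀, hs₀mem, hs₀min⟩ := isCompact_Icc.exists_isMinOn (nonempty_Icc.2 hτ0) hwc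
    set m : ℝ := min ((traj a τ).1 - (traj a τ).2) ((traj a s₀).1 + (traj a s₀).2) with hm
    have hmpos : 0 < m := lt_min (by linarith) (hτw s₀ hs₀mem)
    set E : ℝ := Real.exp ((Kf n : ℝ) * (n : ℝ)) with hE
    have hEpos : 0 < E := Real.exp_pos _
    refine ⟨m / (2 * (E + 1)), by positivity, ?_⟩
    intro a' ha'
    rw [mem_ball, Real.dist_eq] at ha'
    have hkey : ∀ s ∈ Icc (0:ℝ) τ, dist (traj a s) (traj a' s) < m / 2 := by
      intro s hsmem
      have h1 := hcontdep n a a' s ⟨hsmem.1, le_trans hsmem.2 hτn⟩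
      have h2 : Real.exp ((Kf n : ℝ) * s) ≤ E := by
        rw [hE]
        apply Real.exp_le_exp.2
        exact mul_le_mul_of_nonneg_left (le_trans hsmem.2 hτn) (Kf n).coe_nonneg
      have h3 : dist a a' ≤ |a' - a| := le_of_eq (by rw [Real.dist_eq, abs_sub_comm])
      have h4 : dist a a' * Real.exp ((Kf n : ℝ) * s) ≤ |a' - a| * E :=
        mul_le_mul h3 h2 (Real.exp_pos _).le (abs_nonneg _)
      have h5 : |a' - a| * E < (m / (2 * (E + 1))) * E :=
        mul_lt_mul_of_pos_right ha' hEpos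
      have h6 : (m / (2 * (E + 1))) * E ≤ m / 2 := by
        rw [div_mul_eq_mul_div, div_le_div_iff₀ (by positivity) (by norm_num)]
        nlinarith
      linarith
    have hdτ := hkey τ ⟨hτ0, le_rfl⟩
    have hcompτ := hcomp (traj a τ) (traj a' τ)
    have hcτ1 := abs_lt.1 (lt_of_le_of_lt hcompτ.1 hdτ)
    have hcτ2 := abs_lt.1 (lt_of_le_of_lt hcompτ.2 hdτ)
    have hmu : m ≤ (traj a τ).1 - (traj a τ).2 := min_le_left _ _
    refine ⟨τ, hτ0, by linarith [hcτ1.1, hcτ1.2, hcτ2.1, hcτ2.2], ?_⟩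
    intro s hsmem
    have hds := hkey s hsmem
    have hcomps := hcomp (traj a s) (traj a' s)
    have hcs1 := abs_lt.1 (lt_of_le_of_lt hcomps.1 hds)
    have hcs2 := abs_lt.1 (lt_of_le_of_lt hcomps.2 hds)
    have hmw : m ≤ (traj a s₀).1 + (traj a s₀).2 := min_le_right _ _
    have hws : (traj a s₀).1 + (traj a s₀).2 ≤ (traj a s).1 + (traj a s).2 := hs₀min hsmem
    linarith [hcs1.1, hcs1.2, hcs2.1, hcs2.2]
  have hSBopen : IsOpen SB := by
    rw [Metric.isOpen_iff]
    rintro a ⟨τ, hτ0, hτu, hτw⟩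
    have hτn : τ ≤ ((⌈τ⌉₊ + 1 : ℕ) : ℝ) := hceil τ
    set n : ℕ := ⌈τ⌉₊ + 1 with hn
    have hwc : ContinuousOn (fun s => (traj a s).2 - (traj a s).1) (Icc 0 τ) :=
      ((continuous_snd.comp_continuousOn (htrajc a)).sub
        (continuous_fst.comp_continuousOn (htrajc a))).mono (fun z hz => hz.1)
    obtain ⟨s₀, hs₀mem, hs₀min⟩ := isCompact_Icc.exists_isMinOn (nonempty_Icc.2 hτ0) hwc
    set m : ℝ := min (-(traj a τ).2 - (traj a τ).1) ((traj a s₀).2 - (traj a s₀).1) with hm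
    have hmpos : 0 < m := lt_min (by linarith) (by linarith [hτw s₀ hs₀mem])
    set E : ℝ := Real.exp ((Kf n : ℝ) * (n : ℝ)) with hE
    have hEpos : 0 < E := Real.exp_pos _
    refine ⟨m / (2 * (E + 1)), by positivity, ?_⟩
    intro a' ha'
    rw [mem_ball, Real.dist_eq] at ha'
    have hkey : ∀ s ∈ Icc (0:ℝ) τ, dist (traj a s) (traj a' s) < m / 2 := by
      intro s hsmem
      have h1 := hcontdep n a a' s ⟨hsmem.1, le_trans hsmem.2 hτn⟩
      have h2 : Real.exp ((Kf n : ℝ) * s) ≤ E := by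
        rw [hE]
        apply Real.exp_le_exp.2
        exact mul_le_mul_of_nonneg_left (le_trans hsmem.2 hτn) (Kf n).coe_nonneg
      have h3 : dist a a' ≤ |a' - a| := le_of_eq (by rw [Real.dist_eq, abs_sub_comm])
      have h4 : dist a a' * Real.exp ((Kf n : ℝ) * s) ≤ |a' - a| * E :=
        mul_le_mul h3 h2 (Real.exp_pos _).le (abs_nonneg _)
      have h5 : |a' - a| * E < (m / (2 * (E + 1))) * E :=
        mul_lt_mul_of_pos_right ha' hEpos
      have h6 : (m / (2 * (E + 1))) * E ≤ m / 2 := by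
        rw [div_mul_eq_mul_div, div_le_div_iff₀ (by positivity) (by norm_num)]
        nlinarith
      linarith
    have hdτ := hkey τ ⟨hτ0, le_rfl⟩
    have hcompτ := hcomp (traj a τ) (traj a' τ)
    have hcτ1 := abs_lt.1 (lt_of_le_of_lt hcompτ.1 hdτ)
    have hcτ2 := abs_lt.1 (lt_of_le_of_lt hcompτ.2 hdτ)
    have hmu : m ≤ -(traj a τ).2 - (traj a τ).1 := min_le_left _ _
    refine ⟨τ, hτ0, by linarith [hcτ1.1, hcτ1.2, hcτ2.1, hcτ2.2], ?_⟩
    intro s hsmem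
    have hds := hkey s hsmem
    have hcomps := hcomp (traj a s) (traj a' s)
    have hcs1 := abs_lt.1 (lt_of_le_of_lt hcomps.1 hds)
    have hcs2 := abs_lt.1 (lt_of_le_of_lt hcomps.2 hds)
    have hmw : m ≤ (traj a s₀).2 - (traj a s₀).1 := min_le_right _ _
    have hws : (traj a s₀).2 - (traj a s₀).1 ≤ (traj a s).2 - (traj a s).1 := hs₀min hsmem
    linarith [hcs1.1, hcs1.2, hcs2.1, hcs2.2]
  -- disjointness
  have hdisj : ∀ x : ℝ, x ∈ SA → x ∈ SB → False := by
    rintro x ⟨τ₁, hτ₁0, hτ₁u, hτ₁w⟩ ⟨τ₂, hτ₂0, hτ₂u, hτ₂w⟩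
    rcases le_total τ₁ τ₂ with h | h
    · have := hτ₂w τ₁ ⟨hτ₁0, h⟩
      linarith
    · have := hτ₁w τ₂ ⟨hτ₂0, h⟩
      linarith
  -- endpoints belong to the exit sets
  have hgood0 : ∀ a : ℝ, |a| ≤ b₀ →
      ∀ s ∈ Icc (0:ℝ) 0, |(traj a s).1| ≤ (traj a s).2 ∧ (traj a s).2 ≤ b₀ := by
    intro a ha s hsmem
    have hs0 : s = 0 := le_antisymm hsmem.2 hsmem.1
    rw [hs0, htraj0]
    exact ⟨ha, le_rfl⟩
  have hbSA : b₀ ∈ SA := by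
    refine hcaseA b₀ 0 le_rfl (hgood0 b₀ (by rw [abs_of_pos hb₀]) ) ?_
    rw [htraj0]
  have hbSB : -b₀ ∈ SB := by
    refine hcaseB (-b₀) 0 le_rfl (hgood0 (-b₀) (by rw [abs_neg, abs_of_pos hb₀]) ) ?_
    rw [htraj0]
  -- connectedness gives a non-exiting initial value
  obtain ⟨a, hamem, hanot⟩ : ∃ a ∈ Icc (-b₀) b₀, a ∉ SA ∪ SB := by
    by_contra hcon
    push_neg at hcon
    obtain ⟨x, hx⟩ := isPreconnected_Icc (u := SA) (v := SB) hSAopen hSBopen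
      (fun z hz => hcon z hz)
      ⟨b₀, ⟨by linarith [neg_le_self hb₀.le], le_rfl⟩, hbSA⟩
      ⟨-b₀, ⟨le_rfl, by linarith [neg_le_self hb₀.le]⟩, hbSB⟩
    exact hdisj x hx.2.1 hx.2.2
  have haSA : a ∉ SA := fun h => hanot (Or.inl h)
  have haSB : a ∉ SB := fun h => hanot (Or.inr h)
  -- the chosen trajectory stays in the good region forever
  have hglobal : ∀ t : ℝ, 0 ≤ t → |(traj a t).1| ≤ (traj a t).2 ∧ (traj a t).2 ≤ b₀ := by
    set good : ℝ → Prop :=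
      fun t => |(traj a t).1| ≤ (traj a t).2 ∧ (traj a t).2 ≤ b₀ with hgooddef
    show ∀ t : ℝ, 0 ≤ t → good t
    by_contra hbad0
    push_neg at hbad0
    obtain ⟨t₁, ht₁0, ht₁⟩ := hbad0
    set bad : Set ℝ := {t | 0 ≤ t ∧ ¬ good t} with hbaddef
    have hbadne : bad.Nonempty := ⟨t₁, ht₁0, ht₁⟩
    have hbdd : BddBelow bad := ⟨0, fun s hs => hs.1⟩
    set T : ℝ := sInf bad with hTdef
    have hT0 : 0 ≤ T := le_csInf hbadne (fun s hs => hs.1)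
    have hTle : ∀ s ∈ bad, T ≤ s := fun s hs => csInf_le hbdd hs
    have hgoodlt : ∀ s, 0 ≤ s → s < T → good s := by
      intro s h1 h2
      by_contra hb
      exact absurd (hTle s ⟨h1, hb⟩) (not_le.2 h2)
    have hgs_closed : IsClosed {x : ℝ × ℝ | |x.1| ≤ x.2 ∧ x.2 ≤ b₀} :=
      (isClosed_le (continuous_fst.abs) continuous_snd).inter
        (isClosed_le continuous_snd continuous_const)
    have hgoodT : good T := by
      rcases eq_or_lt_of_le hT0 with hT0' | hT0'
      · show |(traj a T).1| ≤ (traj a T).2 ∧ (traj a T).2 ≤ b₀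
        rw [← hT0', htraj0]
        exact ⟨abs_le.2 ⟨hamem.1, hamem.2⟩, le_rfl⟩
      · have hNe : (𝓝[Ioo 0 T] T).NeBot := by
          apply mem_closure_iff_nhdsWithin_neBot.1
          rw [closure_Ioo (ne_of_lt hT0')]
          exact ⟨hT0, le_rfl⟩
        have htend : Tendsto (traj a) (𝓝[Ioo 0 T] T) (𝓝 (traj a T)) :=
          ((htrajc a) T hT0).mono_left (nhdsWithin_mono T (fun z hz => hz.1.le))
        have hmem : traj a T ∈ {x : ℝ × ℝ | |x.1| ≤ x.2 ∧ x.2 ≤ b₀} :=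
          hgs_closed.mem_of_tendsto htend
            (eventually_of_mem self_mem_nhdsWithin
              (fun z hz => hgoodlt z hz.1.le hz.2))
        exact hmem
    have hgoodIcc : ∀ s ∈ Icc (0:ℝ) T, good s := by
      intro s hsmem
      rcases eq_or_lt_of_le hsmem.2 with h | h
      · rw [h]; exact hgoodT
      · exact hgoodlt s hsmem.1 h
    have hBT : 0 < (traj a T).2 :=
      lt_of_lt_of_le (mul_pos hb₀ (Real.exp_pos _))
        ((hGron a T hT0 hgoodIcc T ⟨hT0, le_rfl⟩).1)
    have hfreq : ∃ᶠ z in 𝓝[>] T, z ∈ bad := by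
      rw [frequently_iff]
      intro U hU
      rw [mem_nhdsGT_iff_exists_Ioo_subset] at hU
      obtain ⟨u', hu', hsubU⟩ := hU
      obtain ⟨s, hsbad, hslt⟩ : ∃ s ∈ bad, s < u' := by
        by_contra hc
        push_neg at hc
        have : u' ≤ T := le_csInf hbadne hc
        exact absurd hu' (not_lt.2 this)
      refine ⟨s, hsubU ⟨?_, hslt⟩, hsbad⟩
      rcases eq_or_lt_of_le (hTle s hsbad) with h | h
      · exact absurd (h ▸ hgoodT) hsbad.2
      · exact h
    rcases eq_or_lt_of_le (abs_le.1 hgoodT.1).2 with hueq | hult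
    · exact haSA (hcaseA a T hT0 hgoodIcc hueq)
    rcases eq_or_lt_of_le (abs_le.1 hgoodT.1).1 with hweq | hwgt
    · exact haSB (hcaseB a T hT0 hgoodIcc hweq.symm)
    -- strictly inside the cone at time T
    have hltfilter : 𝓝[>] T ≤ 𝓝[Ici 0] T :=
      nhdsWithin_mono T (fun z hz => le_trans hT0 (le_of_lt hz))
    have hcA : ContinuousWithinAt (fun z => (traj a z).1) (Ici 0) T :=
      (continuous_fst.comp_continuousOn (htrajc a)) T hT0
    have hcB : ContinuousWithinAt (fun z => (traj a z).2) (Ici 0) T :=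
      (continuous_snd.comp_continuousOn (htrajc a)) T hT0
    have hevu : ∀ᶠ z in 𝓝[>] T, (traj a z).1 < (traj a z).2 := by
      have hcu : ContinuousWithinAt (fun z => (traj a z).1 - (traj a z).2) (Ici 0) T :=
        hcA.sub hcB
      have h1 : ∀ᶠ z in 𝓝[Ici 0] T, (traj a z).1 - (traj a z).2 < 0 :=
        hcu.eventually (gt_mem_nhds (by linarith : (traj a T).1 - (traj a T).2 < 0))
      exact (h1.filter_mono hltfilter).mono (fun z hz => by linarith [hz])
    have hevw : ∀ᶠ z in 𝓝[>] T, -(traj a z).2 < (traj a z).1 := by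
      have hcw : ContinuousWithinAt (fun z => (traj a z).1 + (traj a z).2) (Ici 0) T :=
        hcA.add hcB
      have h1 : ∀ᶠ z in 𝓝[Ici 0] T, 0 < (traj a z).1 + (traj a z).2 :=
        hcw.eventually (lt_mem_nhds (by linarith : (0:ℝ) < (traj a T).1 + (traj a T).2))
      exact (h1.filter_mono hltfilter).mono (fun z hz => by linarith [hz])
    have hevB : ∀ᶠ z in 𝓝[>] T, (traj a z).2 ≤ b₀ := by
      rcases eq_or_lt_of_le hgoodT.2 with hBb | hBb
      · have hd := htrajdg a T hT0 hgoodT.1 hgoodT.2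
        have hBd : HasDerivWithinAt (fun z => (traj a z).2)
            ((vfX f₁ f₂ g₁ g₂ (T, traj a T)).2) (Ici T) T :=
          (hasDerivWithinAt_snd_aux hd).mono (Ici_subset_Ici.2 hT0)
        have hneg : (vfX f₁ f₂ g₁ g₂ (T, traj a T)).2 < 0 := by
          have := (vfX_snd_bounds f₁ f₂ g₁ g₂ (t := T) hb3 hb4 hgoodT.1).1
          nlinarith
        refine (right_deriv_neg_aux hBd hneg).mono ?_
        intro z hz
        have hz' : (traj a z).2 < (traj a T).2 := hz
        linarith [hBb]
      · have h1 : ∀ᶠ z in 𝓝[Ici 0] T, (traj a z).2 < b₀ :=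
          hcB.eventually (gt_mem_nhds hBb)
        exact (h1.filter_mono hltfilter).mono (fun z hz => le_of_lt hz)
    have hevgood : ∀ᶠ z in 𝓝[>] T, z ∉ bad := by
      filter_upwards [hevu, hevw, hevB,
        eventually_of_mem self_mem_nhdsWithin (fun z (hz : z ∈ Ioi T) => le_trans hT0 hz.le)]
        with z h1 h2 h3 h4
      intro hzbad
      exact hzbad.2 ⟨abs_le.2 ⟨by linarith, h1.le⟩, h3⟩
    obtain ⟨z, hz1, hz2⟩ := (hfreq.and_eventually hevgood).exists
    exact hz2 hz1
  -- conclusion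
  refine ⟨a, b₀, fun t => (traj a t).1, fun t => (traj a t).2, hb₀, ?_, ?_, ?_, ?_⟩
  · have h1 : a^2 ≤ b₀^2 := sq_le_sq' hamem.1 hamem.2
    rw [hb₀def] at h1 ⊢
    nlinarith
  · show (traj a 0).1 = a
    rw [htraj0]
  · show (traj a 0).2 = b₀
    rw [htraj0]
  · intro t ht
    have hg := hglobal t ht
    have hgd := htrajdg a t ht hg.1 hg.2
    have hGb := (hGron a t ht (fun s hs => hglobal s hs.1) t ⟨ht, le_rfl⟩).2
    have hB0 : 0 ≤ (traj a t).2 := le_trans (abs_nonneg _) hg.1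
    have hexp : b₀ * Real.exp (-(1/2) * t) = Real.exp (-t/2) * b₀ := by
      rw [mul_comm]
      congr 1
      ring
    refine ⟨?_, ?_, ?_, ?_⟩
    · have h := hasDerivWithinAt_fst_aux hgd
      simpa [vfX] using h
    · have h := hasDerivWithinAt_snd_aux hgd
      simpa [vfX] using h
    · rw [← hexp]
      linarith [hg.1, hGb]
    · rw [← hexp, abs_of_nonneg hB0]
      linarith [hGb]
end

section
/- Let $\epsilon \in (0, 1/10]$, let $a > 0$, and let $\alpha, \beta : [0, (\ln 2)/4] \to \mathbb{R}$ be differentiable functions with $\alpha(0) = a$, $\beta(0) = 2a$, satisfying for all $t \in [0, (\ln 2)/4]$: $|\alpha'(t) - \alpha(t)| \le \epsilon\,(|\alpha(t)| + |\beta(t)|)$ and $|\beta'(t) + \beta(t)| \le \epsilon\,(|\alpha(t)| + |\beta(t)|)$. Then $\alpha(t) \le \beta(t) \le 2\alpha(t)$ and $\alpha(t) > 0$ for all $t \in [0, (\ln 2)/4]$, i.e. the trajectory remains in the closed sector $\overline{\Omega}_+ = \{(\alpha,\beta) : 0 < \alpha \le \beta \le 2\alpha\}$. -/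
open Set Filter Real

lemma expLower (f : ℝ → ℝ) (c t : ℝ)
    (hd : ∀ s ∈ Set.Icc 0 t, DifferentiableAt ℝ f s)
    (h : ∀ s ∈ Set.Icc 0 t, c * f s ≤ deriv f s) :
    ∀ s ∈ Set.Icc 0 t, f 0 * Real.exp (c * s) ≤ f s := by
  intro s hs
  have h0t : (0:ℝ) ∈ Set.Icc (0:ℝ) t := ⟨le_refl _, le_trans hs.1 hs.2⟩
  set F : ℝ → ℝ := fun y => f y * Real.exp (-(c * y)) with hF
  have hFd : ∀ y ∈ Set.Icc (0:ℝ) t,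
      HasDerivAt F ((deriv f y - c * f y) * Real.exp (-(c * y))) y := by
    intro y hy
    have h1 : HasDerivAt (fun z : ℝ => Real.exp (-(c * z)))
        (Real.exp (-(c * y)) * (-c)) y :=
      by simpa using (((hasDerivAt_id y).const_mul c).neg).exp
    have h2 : HasDerivAt (fun z => f z * Real.exp (-(c * z)))
        (deriv f y * Real.exp (-(c * y)) + f y * (Real.exp (-(c * y)) * (-c))) y :=
      ((hd y hy).hasDerivAt.fun_mul h1)
    convert h2 using 1
    ring
  have hmono : MonotoneOn F (Set.Icc 0 t) := by
    apply monotoneOn_of_deriv_nonneg (convex_Icc 0 t)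
    · exact fun y hy => ((hFd y hy).continuousAt).continuousWithinAt
    · intro y hy
      exact ((hFd y (interior_subset hy)).differentiableAt).differentiableWithinAt
    · intro y hy
      rw [(hFd y (interior_subset hy)).deriv]
      have := h y (interior_subset hy)
      have := Real.exp_pos (-(c * y))
      nlinarith
  have key : F 0 ≤ F s := hmono h0t hs hs.1
  have hF0 : F 0 = f 0 := by simp [hF]
  rw [hF0] at key
  have hpos := Real.exp_pos (c * s)
  have := mul_le_mul_of_nonneg_right key hpos.le
  calc f 0 * Real.exp (c * s) ≤ f s * Real.exp (-(c * s)) * Real.exp (c * s) := this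
    _ = f s := by rw [mul_assoc, ← Real.exp_add]; simp

lemma expUpper (f : ℝ → ℝ) (c t : ℝ)
    (hd : ∀ s ∈ Set.Icc 0 t, DifferentiableAt ℝ f s)
    (h : ∀ s ∈ Set.Icc 0 t, deriv f s ≤ c * f s) :
    ∀ s ∈ Set.Icc 0 t, f s ≤ f 0 * Real.exp (c * s) := by
  intro s hs
  have := expLower (fun y => -f y) c t (fun y hy => (hd y hy).neg)
    (fun y hy => by
      simp only [deriv.fun_neg]
      show c * (-f y) ≤ -(deriv f y)
      have := h y hy; linarith) s hs
  simp only [neg_mul] at this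
  linarith

lemma le_of_lt_limits (F G : ℝ → ℝ) (x : ℝ) (hx : 0 ≤ x)
    (hF : ContinuousAt F x) (hG : ContinuousAt G x)
    (h : ∀ s, 0 ≤ s → s < x → F s ≤ G s) (h0 : F 0 ≤ G 0) : F x ≤ G x := by
  rcases hx.eq_or_lt with rfl | hx0
  · exact h0
  · haveI : (nhdsWithin x (Set.Iio x)).NeBot := by
      exact nhdsLT_neBot x
    refine le_of_tendsto_of_tendsto (b := nhdsWithin x (Set.Iio x))
      (hF.tendsto.mono_left nhdsWithin_le_nhds)
      (hG.tendsto.mono_left nhdsWithin_le_nhds) ?_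
    have h1 : ∀ᶠ s in nhdsWithin x (Set.Iio x), 0 < s :=
      eventually_nhdsWithin_of_eventually_nhds (eventually_gt_nhds hx0)
    have h2 : ∀ᶠ s in nhdsWithin x (Set.Iio x), s < x :=
      eventually_mem_nhdsWithin
    filter_upwards [h1, h2] with s hs1 hs2
    exact h s hs1.le hs2
/-- Trajectory confinement: for the perturbed hyperbolic system with `ε ≤ 1/10`,
a trajectory starting at `(a, 2a)` remains in the closed sector
`{0 < α ≤ β ≤ 2α}` for `t ∈ [0, (ln 2)/4]`. -/
theorem stmt_10 (ε a : ℝ) (hε : 0 < ε) (hε' : ε ≤ 1 / 10) (ha : 0 < a)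
    (α β : ℝ → ℝ) (hα0 : α 0 = a) (hβ0 : β 0 = 2 * a)
    (hαd : ∀ t ∈ Set.Icc 0 (Real.log 2 / 4), DifferentiableAt ℝ α t)
    (hβd : ∀ t ∈ Set.Icc 0 (Real.log 2 / 4), DifferentiableAt ℝ β t)
    (hα : ∀ t ∈ Set.Icc 0 (Real.log 2 / 4),
      |deriv α t - α t| ≤ ε * (|α t| + |β t|))
    (hβ : ∀ t ∈ Set.Icc 0 (Real.log 2 / 4),
      |deriv β t + β t| ≤ ε * (|α t| + |β t|)) :
    ∀ t ∈ Set.Icc 0 (Real.log 2 / 4), α t ≤ β t ∧ β t ≤ 2 * α t ∧ 0 < α t := by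
  have hlog2 : (0:ℝ) < Real.log 2 := Real.log_pos (by norm_num)
  set T : ℝ := Real.log 2 / 4 with hTdef
  have hT0 : 0 < T := by positivity
  set S : Set ℝ := {t | t ∈ Set.Icc 0 T ∧
    ∀ s ∈ Set.Icc 0 t, α s ≤ β s ∧ β s ≤ 2 * α s ∧ 0 < α s} with hS
  have h0S : (0:ℝ) ∈ S := by
    refine ⟨⟨le_refl 0, hT0.le⟩, fun s hs => ?_⟩
    have hs0 : s = 0 := le_antisymm hs.2 hs.1
    rw [hs0, hα0, hβ0]
    exact ⟨by linarith, le_refl _, ha⟩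
  have hbdd : BddAbove S := ⟨T, fun x hx => hx.1.2⟩
  have hne : S.Nonempty := ⟨0, h0S⟩
  -- a priori exponential bounds on any interval where the sector condition holds
  have claim1 : ∀ t ∈ S, ∀ s ∈ Set.Icc 0 t,
      a * Real.exp ((1-3*ε) * s) ≤ α s ∧ α s ≤ a * Real.exp ((1+3*ε) * s) ∧
      2*a * Real.exp (-(1+2*ε) * s) ≤ β s ∧ β s ≤ 2*a * Real.exp (-(1-2*ε) * s) := by
    intro t ht
    have hsub : Set.Icc (0:ℝ) t ⊆ Set.Icc 0 T := Set.Icc_subset_Icc le_rfl ht.1.2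
    have habs : ∀ s ∈ Set.Icc (0:ℝ) t,
        ((1-3*ε) * α s ≤ deriv α s ∧ deriv α s ≤ (1+3*ε) * α s) ∧
        (-(1+2*ε) * β s ≤ deriv β s ∧ deriv β s ≤ -(1-2*ε) * β s) := by
      intro s hs
      obtain ⟨h1, h2, h3⟩ := ht.2 s hs
      have hβpos : 0 < β s := lt_of_lt_of_le h3 h1
      have ha1 := hα s (hsub hs)
      have ha2 := hβ s (hsub hs)
      rw [abs_of_pos h3, abs_of_pos hβpos] at ha1 ha2
      obtain ⟨ha1l, ha1r⟩ := abs_le.mp ha1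
      obtain ⟨ha2l, ha2r⟩ := abs_le.mp ha2
      have k1 : ε * (α s + β s) ≤ ε * (3 * α s) :=
        mul_le_mul_of_nonneg_left (by linarith) hε.le
      have k2 : ε * (α s + β s) ≤ ε * (2 * β s) :=
        mul_le_mul_of_nonneg_left (by linarith) hε.le
      constructor
      · constructor
        · nlinarith
        · nlinarith
      · constructor
        · nlinarith
        · nlinarith
    have b1 := expLower α (1-3*ε) t (fun s hs => hαd s (hsub hs)) (fun s hs => (habs s hs).1.1)
    have b2 := expUpper α (1+3*ε) t (fun s hs => hαd s (hsub hs)) (fun s hs => (habs s hs).1.2)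
    have b3 := expLower β (-(1+2*ε)) t (fun s hs => hβd s (hsub hs)) (fun s hs => (habs s hs).2.1)
    have b4 := expUpper β (-(1-2*ε)) t (fun s hs => hβd s (hsub hs)) (fun s hs => (habs s hs).2.2)
    intro s hs
    have c1 := b1 s hs; have c2 := b2 s hs; have c3 := b3 s hs; have c4 := b4 s hs
    rw [hα0] at c1 c2
    rw [hβ0] at c3 c4
    exact ⟨c1, c2, by linarith, by linarith⟩
  -- numeric gap facts
  have gap1 : ∀ s ∈ Set.Icc (0:ℝ) T,
      a * Real.exp ((1+3*ε) * s) < 2*a * Real.exp (-(1+2*ε) * s) := by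
    intro s hs
    have e1 : (2+5*ε) * s ≤ (5/2) * s :=
      mul_le_mul_of_nonneg_right (by linarith) hs.1
    have e2 : (2+5*ε) * s < Real.log 2 := by
      have := hs.2
      rw [hTdef] at this
      linarith
    have e3 : Real.exp ((2+5*ε)*s) < 2 := by
      calc Real.exp ((2+5*ε)*s) < Real.exp (Real.log 2) := Real.exp_lt_exp.mpr e2
        _ = 2 := Real.exp_log (by norm_num)
    have esplit : Real.exp ((1+3*ε) * s)
        = Real.exp ((2+5*ε)*s) * Real.exp (-(1+2*ε) * s) := by
      rw [← Real.exp_add]; ring_nf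
    rw [esplit]
    have hX := Real.exp_pos (-(1+2*ε) * s)
    have e4 := mul_lt_mul_of_pos_right e3 hX
    have e5 := mul_lt_mul_of_pos_left e4 ha
    nlinarith [e5]
  have gap2 : ∀ s : ℝ, 0 ≤ s →
      2*a * Real.exp (-(1-2*ε) * s) ≤ 2*a * Real.exp ((1-3*ε) * s) := by
    intro s hs0
    have h1 : -(1-2*ε) * s ≤ (1-3*ε) * s := by nlinarith
    exact mul_le_mul_of_nonneg_left (Real.exp_le_exp.mpr h1) (by linarith)
  -- the supremum of the invariant set
  set t₀ := sSup S with ht₀def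
  have ht₀0 : 0 ≤ t₀ := le_csSup hbdd h0S
  have ht₀T : t₀ ≤ T := csSup_le hne (fun x hx => hx.1.2)
  have ht₀mem : t₀ ∈ Set.Icc (0:ℝ) T := ⟨ht₀0, ht₀T⟩
  have Pbefore : ∀ s, 0 ≤ s → s < t₀ →
      (α s ≤ β s ∧ β s ≤ 2 * α s ∧ 0 < α s) ∧
      (a * Real.exp ((1-3*ε) * s) ≤ α s ∧ α s ≤ a * Real.exp ((1+3*ε) * s) ∧
       2*a * Real.exp (-(1+2*ε) * s) ≤ β s ∧ β s ≤ 2*a * Real.exp (-(1-2*ε) * s)) := by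
    intro s hs0 hst
    obtain ⟨u, huS, hsu⟩ := exists_lt_of_lt_csSup hne hst
    have hsu' : s ∈ Set.Icc 0 u := ⟨hs0, hsu.le⟩
    exact ⟨huS.2 s hsu', claim1 u huS s hsu'⟩
  have hαc : ContinuousAt α t₀ := (hαd t₀ ht₀mem).continuousAt
  have hβc : ContinuousAt β t₀ := (hβd t₀ ht₀mem).continuousAt
  -- the four bounds at t₀ by taking limits from the left
  have B1 : a * Real.exp ((1-3*ε) * t₀) ≤ α t₀ :=
    le_of_lt_limits _ α t₀ ht₀0 (by fun_prop) hαc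
      (fun s h1 h2 => (Pbefore s h1 h2).2.1) (by simp [hα0])
  have B2 : α t₀ ≤ a * Real.exp ((1+3*ε) * t₀) :=
    le_of_lt_limits α _ t₀ ht₀0 hαc (by fun_prop)
      (fun s h1 h2 => (Pbefore s h1 h2).2.2.1) (by simp [hα0])
  have B3 : 2*a * Real.exp (-(1+2*ε) * t₀) ≤ β t₀ :=
    le_of_lt_limits _ β t₀ ht₀0 (by fun_prop) hβc
      (fun s h1 h2 => (Pbefore s h1 h2).2.2.2.1) (by simp [hβ0])
  have B4 : β t₀ ≤ 2*a * Real.exp (-(1-2*ε) * t₀) :=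
    le_of_lt_limits β _ t₀ ht₀0 hβc (by fun_prop)
      (fun s h1 h2 => (Pbefore s h1 h2).2.2.2.2) (by simp [hβ0])
  have hαpos : 0 < α t₀ := lt_of_lt_of_le (by positivity) B1
  have hαβ : α t₀ < β t₀ := lt_of_le_of_lt B2 (lt_of_lt_of_le (gap1 t₀ ht₀mem) B3)
  have hβ2α : β t₀ ≤ 2 * α t₀ := by
    have := gap2 t₀ ht₀0
    linarith
  have ht₀S : t₀ ∈ S := by
    refine ⟨ht₀mem, fun s hs => ?_⟩
    rcases hs.2.eq_or_lt with rfl | h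
    · exact ⟨hαβ.le, hβ2α, hαpos⟩
    · exact (Pbefore s hs.1 h).1
  -- the supremum is T
  have ht₀eq : t₀ = T := by
    by_contra hne'
    have hlt : t₀ < T := lt_of_le_of_ne ht₀T hne'
    have E1 : ∀ᶠ s in nhdsWithin t₀ (Set.Ioi t₀), 0 < α s :=
      ((hαc.tendsto.mono_left nhdsWithin_le_nhds).eventually (eventually_gt_nhds hαpos))
    have E2 : ∀ᶠ s in nhdsWithin t₀ (Set.Ioi t₀), α s < β s := by
      have hc : ContinuousAt (fun s => β s - α s) t₀ := hβc.sub hαc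
      have h0 : (0:ℝ) < β t₀ - α t₀ := by linarith
      have hev2 : ∀ᶠ s in nhdsWithin t₀ (Set.Ioi t₀), 0 < β s - α s :=
        (hc.tendsto.mono_left nhdsWithin_le_nhds).eventually (eventually_gt_nhds h0)
      filter_upwards [hev2] with s hs
      linarith
    have E3 : ∀ᶠ s in nhdsWithin t₀ (Set.Ioi t₀), β s < 2 * α s := by
      rcases hβ2α.lt_or_eq with hlt2 | heq2
      · have hc : ContinuousAt (fun s => 2 * α s - β s) t₀ := (hαc.const_mul 2).sub hβc
        have h0 : (0:ℝ) < 2 * α t₀ - β t₀ := by linarith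
        have hev3 : ∀ᶠ s in nhdsWithin t₀ (Set.Ioi t₀), 0 < 2 * α s - β s :=
          (hc.tendsto.mono_left nhdsWithin_le_nhds).eventually (eventually_gt_nhds h0)
        filter_upwards [hev3] with s hs
        linarith
      · -- boundary case: use that the derivative of 2α - β is positive
        have hdh : HasDerivAt (fun s => 2 * α s - β s) (2 * deriv α t₀ - deriv β t₀) t₀ :=
          (((hαd t₀ ht₀mem).hasDerivAt).const_mul 2).sub ((hβd t₀ ht₀mem).hasDerivAt)
        have hdpos : 0 < 2 * deriv α t₀ - deriv β t₀ := by
          have ha1 := hα t₀ ht₀mem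
          have ha2 := hβ t₀ ht₀mem
          rw [abs_of_pos hαpos, abs_of_pos (by linarith : (0:ℝ) < β t₀)] at ha1 ha2
          obtain ⟨ha1l, ha1r⟩ := abs_le.mp ha1
          obtain ⟨ha2l, ha2r⟩ := abs_le.mp ha2
          have k1 : ε * (α t₀ + β t₀) ≤ ε * (3 * α t₀) :=
            mul_le_mul_of_nonneg_left (by linarith) hε.le
          nlinarith
        have hslope := hasDerivAt_iff_tendsto_slope.mp hdh
        have hmono : nhdsWithin t₀ (Set.Ioi t₀) ≤ nhdsWithin t₀ {t₀}ᶜ :=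
          nhdsWithin_mono _ (fun y hy => by
            simp only [Set.mem_compl_iff, Set.mem_singleton_iff]
            exact ne_of_gt hy)
        have hev : ∀ᶠ s in nhdsWithin t₀ (Set.Ioi t₀),
            0 < slope (fun s => 2 * α s - β s) t₀ s :=
          (hslope.mono_left hmono).eventually (eventually_gt_nhds hdpos)
        have hgt : ∀ᶠ s in nhdsWithin t₀ (Set.Ioi t₀), t₀ < s := eventually_mem_nhdsWithin
        filter_upwards [hev, hgt] with s hs1 hs2
        rw [slope_def_field] at hs1
        have hspos : (0:ℝ) < s - t₀ := by linarith
        have := mul_pos hs1 hspos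
        rw [div_mul_cancel₀ _ (ne_of_gt hspos)] at this
        have h00 : 2 * α t₀ - β t₀ = 0 := by linarith
        nlinarith
    have E4 : ∀ᶠ s in nhdsWithin t₀ (Set.Ioi t₀), s < T :=
      ((eventually_lt_nhds hlt).filter_mono nhdsWithin_le_nhds)
    have hgt : ∀ᶠ s in nhdsWithin t₀ (Set.Ioi t₀), t₀ < s := eventually_mem_nhdsWithin
    have hall := E1.and (E2.and (E3.and (E4.and hgt)))
    rw [Filter.eventually_iff] at hall
    obtain ⟨u, hu, hsub2⟩ := mem_nhdsGT_iff_exists_Ioc_subset.mp hall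
    have huself := hsub2 ⟨hu, le_refl u⟩
    have huS : u ∈ S := by
      refine ⟨⟨le_trans ht₀0 (le_of_lt hu), huself.2.2.2.1.le⟩, fun s hs => ?_⟩
      rcases le_or_gt s t₀ with h | h
      · exact ht₀S.2 s ⟨hs.1, h⟩
      · have hsE := hsub2 ⟨h, hs.2⟩
        exact ⟨hsE.2.1.le, hsE.2.2.1.le, hsE.1⟩
    have : u ≤ t₀ := le_csSup hbdd huS
    exact absurd hu (by simp only [Set.mem_Ioi]; linarith)
  intro t ht
  exact ht₀S.2 t (by rw [ht₀eq]; exact ht)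
end
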